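/- arXiv:1508.02688 — 5 statements merged into one kernel-verified Lean document; each statement's English description precedes it below -/
import Mathlib

section
/- Let q be a power of an odd prime, let d = 2n+1 ≥ 3 be an odd integer, let k ≥ 2 be an integer, and suppose there exists i ∈ F_q with i² = −1. Let E = {(t_1, i t_1, t_2, i t_2, …, t_n, i t_n, s) : t_1, …, t_n, s ∈ F_q} ⊆ F_q^d. Then |E| = q^{(d+1)/2} and Δ_k(E) = {σ² : σ ∈ F_q}; in particular |Δ_k(E)| = (q+1)/2 < q, so Δ_k(E) ≠ F_q. -/
open Finset

/-- `‖x‖ = x₁² + ⋯ + x_d²` for `x ∈ 𝔽_q^d`. -/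
def normF {F : Type*} [Field F] {d : ℕ} (x : Fin d → F) : F := ∑ i, x i ^ 2

/-- The `k`-resultant set `Δ_k(E) = {‖x¹ - x² - ⋯ - x^k‖ : xⁱ ∈ E}` (for `k ≥ 2`):
`y` plays the role of `x¹` and `x 0, …, x (k-2)` play the roles of `x², …, x^k`. -/
def Delta {F : Type*} [Field F] {d : ℕ} (k : ℕ) (E : Set (Fin d → F)) : Set F :=
  {t | ∃ (y : Fin d → F) (x : Fin (k - 1) → Fin d → F),
    y ∈ E ∧ (∀ i, x i ∈ E) ∧ normF (y - ∑ i, x i) = t}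

/-- The `2m`-energy `Λ_{2m}(E)`: the number of `2m`-tuples of points of `E`
whose first `m` entries and last `m` entries have equal sums. -/
noncomputable def energy {F : Type*} [Field F] {d : ℕ} (m : ℕ) (E : Set (Fin d → F)) : ℕ :=
  Nat.card {p : (Fin m → Fin d → F) × (Fin m → Fin d → F) //
    (∀ i, p.1 i ∈ E) ∧ (∀ i, p.2 i ∈ E) ∧ (∑ i, p.1 i) = ∑ i, p.2 i}

/-- The (normalized) Fourier transform of the indicator function of `E ⊆ 𝔽_q^d`,
with respect to the additive character `χ`. -/
noncomputable def ftF {F : Type*} [Field F] [Fintype F] {d : ℕ} (χ : AddChar F ℂ)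
    (E : Set (Fin d → F)) (m : Fin d → F) : ℂ :=
  ((Fintype.card F : ℂ) ^ d)⁻¹ *
    ∑ x : Fin d → F, Set.indicator E (fun y => χ (-(∑ i, m i * y i))) x

/-- `V ⊆ 𝔽_q^d` is `(c₁,c₂,c₃)`-regular (with respect to the character `χ`). -/
def IsRegularVariety {F : Type*} [Field F] [Fintype F] {d : ℕ} (c1 c2 c3 : ℝ) (χ : AddChar F ℂ)
    (V : Set (Fin d → F)) : Prop :=
  c1 * (Fintype.card F : ℝ) ^ (d - 1) ≤ (Nat.card V : ℝ) ∧
  (Nat.card V : ℝ) ≤ c2 * (Fintype.card F : ℝ) ^ (d - 1) ∧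
  ∀ m : Fin d → F, m ≠ 0 →
    ‖ftF χ V m‖ ≤ c3 * (Fintype.card F : ℝ) ^ (-(((d : ℝ) + 1) / 2))

/-- `V ⊆ 𝔽_q²` is a `(c₁,c₂,c₃)`-nondegenerate regular curve defined by a nonzero
polynomial of total degree at most `n` (with respect to the character `χ`). -/
def IsNondegCurve {F : Type*} [Field F] [Fintype F] (c1 c2 c3 : ℝ) (χ : AddChar F ℂ)
    (n : ℕ) (V : Set (Fin 2 → F)) : Prop :=
  (∃ Q : MvPolynomial (Fin 2) F, Q ≠ 0 ∧ Q.totalDegree ≤ n ∧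
      (¬∃ A B : MvPolynomial (Fin 2) F, A.totalDegree = 1 ∧ Q = A * B) ∧
      V = {x | MvPolynomial.eval x Q = 0}) ∧
  c1 * (Fintype.card F : ℝ) ≤ (Nat.card V : ℝ) ∧
  (Nat.card V : ℝ) ≤ c2 * (Fintype.card F : ℝ) ∧
  ∀ m : Fin 2 → F, m ≠ 0 →
    ‖ftF χ V m‖ ≤ c3 * (Fintype.card F : ℝ) ^ (-(3 / 2) : ℝ)

lemma aux_sum_range_two_mul {M : Type*} [AddCommMonoid M] (n : ℕ) (f : ℕ → M) :
    ∑ j ∈ Finset.range (2 * n), f j = ∑ j ∈ Finset.range n, (f (2 * j) + f (2 * j + 1)) := by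
  induction n with
  | zero => simp
  | succ m ih =>
    have h : 2 * (m + 1) = (2 * m + 1) + 1 := by omega
    rw [h, Finset.sum_range_succ, Finset.sum_range_succ, ih, Finset.sum_range_succ, add_assoc]

lemma aux_card_squares (F : Type*) [Field F] [Fintype F] (h2 : (2 : F) ≠ 0) :
    Nat.card {u : F | ∃ σ : F, u = σ ^ 2} = (Fintype.card F + 1) / 2 := by
  classical
  set S : Finset F := Finset.image (fun σ : F => σ ^ 2) Finset.univ with hS
  have hset : {u : F | ∃ σ : F, u = σ ^ 2} = ↑S := by
    ext u; simp [hS, eq_comm]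
  rw [hset, Nat.card_coe_set_eq, Set.ncard_coe_finset]
  have h0 : (0 : F) ∈ S := by
    simp only [hS, Finset.mem_image]
    exact ⟨0, Finset.mem_univ 0, by ring⟩
  have key : Fintype.card F = ∑ u ∈ S, (Finset.univ.filter (fun σ : F => σ ^ 2 = u)).card := by
    rw [← Finset.card_univ]
    exact Finset.card_eq_sum_card_fiberwise
      (fun x _ => Finset.mem_image_of_mem _ (Finset.mem_univ x))
  have key1 : (Finset.univ.filter (fun σ : F => σ ^ 2 = 0)).card = 1 := by
    have : Finset.univ.filter (fun σ : F => σ ^ 2 = 0) = {0} := by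
      ext σ; simp [pow_eq_zero_iff]
    rw [this, Finset.card_singleton]
  have key2 : ∀ u ∈ S.erase 0, (Finset.univ.filter (fun σ : F => σ ^ 2 = u)).card = 2 := by
    intro u hu
    obtain ⟨hu0, huS⟩ := Finset.mem_erase.mp hu
    obtain ⟨b, -, hb⟩ := Finset.mem_image.mp huS
    have hb0 : b ≠ 0 := by rintro rfl; exact hu0 (by simpa using hb.symm)
    have hbnb : b ≠ -b := by
      intro h
      apply hb0
      have h2b : (2 : F) * b = 0 := by rw [two_mul]; exact add_eq_zero_iff_eq_neg.mpr h
      exact (mul_eq_zero.mp h2b).resolve_left h2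
    have hfil : Finset.univ.filter (fun σ : F => σ ^ 2 = u) = {b, -b} := by
      ext σ
      simp [← hb, sq_eq_sq_iff_eq_or_eq_neg]
    rw [hfil, Finset.card_insert_of_notMem (by simpa using hbnb), Finset.card_singleton]
  have hsum : Fintype.card F = 1 + 2 * (S.card - 1) := by
    conv_lhs => rw [key, ← Finset.insert_erase h0]
    rw [ Finset.sum_insert (Finset.notMem_erase _ _), key1,
        Finset.sum_congr rfl key2, Finset.sum_const, smul_eq_mul,
        Finset.card_erase_of_mem h0, mul_comm]
  have hpos : 0 < S.card := Finset.card_pos.mpr ⟨0, h0⟩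
  omega

/-- for odd `d = 2n+1 ≥ 3`, `k ≥ 2`, and `i² = -1`, the set
`E = {(t₁, it₁, …, t_n, it_n, s)}` has `|E| = q^{(d+1)/2}`,
`Δ_k(E) = {σ² : σ ∈ 𝔽_q}`, `|Δ_k(E)| = (q+1)/2 < q`, and `Δ_k(E) ≠ 𝔽_q`. -/
theorem stmt_0 {F : Type*} [Field F] [Fintype F] (q n k : ℕ)
    (hq : q = Fintype.card F) (hodd : Odd q) (hn : 1 ≤ n) (hk : 2 ≤ k)
    (i : F) (hi : i ^ 2 = -1)
    (E : Set (Fin (2 * n + 1) → F))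
    (hE : E = {x | ∃ (t : Fin n → F) (s : F),
      (∀ j : Fin n, x ⟨2 * (j : ℕ), by have := j.isLt; omega⟩ = t j ∧
        x ⟨2 * (j : ℕ) + 1, by have := j.isLt; omega⟩ = i * t j) ∧
      x ⟨2 * n, by omega⟩ = s}) :
    Nat.card E = q ^ (n + 1) ∧
    Delta k E = {u : F | ∃ σ : F, u = σ ^ 2} ∧
    Nat.card (Delta k E) = (q + 1) / 2 ∧
    (q + 1) / 2 < q ∧
    Delta k E ≠ Set.univ := by
  classical
  have hchar : ringChar F ≠ 2 := by
    intro hch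
    have h := FiniteField.even_card_iff_char_two.mp hch
    obtain ⟨m, hm⟩ := hodd
    omega
  have h2F : (2 : F) ≠ 0 := Ring.two_ne_zero hchar
  -- membership characterization
  have hmem : ∀ x : Fin (2 * n + 1) → F, x ∈ E ↔ ∀ j : Fin n,
      x ⟨2 * (j : ℕ) + 1, by have := j.isLt; omega⟩ =
        i * x ⟨2 * (j : ℕ), by have := j.isLt; omega⟩ := by
    intro x
    rw [hE]
    constructor
    · rintro ⟨t, s, ht, -⟩ j
      rw [(ht j).2, (ht j).1]
    · intro h
      exact ⟨fun j => x ⟨2 * (j : ℕ), by have := j.isLt; omega⟩, x ⟨2 * n, by omega⟩,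
        fun j => ⟨rfl, h j⟩, rfl⟩
  -- norm of elements of E
  have hnorm : ∀ x : Fin (2 * n + 1) → F, x ∈ E → normF x = x ⟨2 * n, by omega⟩ ^ 2 := by
    intro x hx
    have hx' := (hmem x).mp hx
    set f : ℕ → F := fun m => if h : m < 2 * n + 1 then x ⟨m, h⟩ ^ 2 else 0 with hf
    have h1 : normF x = ∑ j ∈ Finset.range (2 * n + 1), f j := by
      rw [normF, ← Fin.sum_univ_eq_sum_range]
      exact Finset.sum_congr rfl fun j _ => by
        show x j ^ 2 = (if h : (j : ℕ) < 2 * n + 1 then x ⟨j, h⟩ ^ 2 else 0)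
        rw [dif_pos j.isLt]
    rw [h1, Finset.sum_range_succ, aux_sum_range_two_mul]
    have h3 : ∀ j ∈ Finset.range n, f (2 * j) + f (2 * j + 1) = 0 := by
      intro j hj
      have hjn : j < n := Finset.mem_range.mp hj
      have e1 : f (2 * j) = x ⟨2 * j, by omega⟩ ^ 2 := dif_pos (by omega)
      have e2 : f (2 * j + 1) = x ⟨2 * j + 1, by omega⟩ ^ 2 := dif_pos (by omega)
      have h4 : x ⟨2 * j + 1, by omega⟩ = i * x ⟨2 * j, by omega⟩ := hx' ⟨j, hjn⟩
      rw [e1, e2, h4, mul_pow, hi]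
      ring
    rw [Finset.sum_congr rfl h3, Finset.sum_const_zero, zero_add]
    exact dif_pos (by omega)
  -- the parametrization
  set g : (Fin n → F) × F → (Fin (2 * n + 1) → F) := fun p j =>
    if h : (j : ℕ) = 2 * n then p.2
    else if (j : ℕ) % 2 = 0 then p.1 ⟨(j : ℕ) / 2, by have := j.isLt; omega⟩
    else i * p.1 ⟨(j : ℕ) / 2, by have := j.isLt; omega⟩ with hg
  have hg2n : ∀ p : (Fin n → F) × F, g p ⟨2 * n, by omega⟩ = p.2 := fun p => dif_pos rfl
  have hgeven : ∀ (p : (Fin n → F) × F) (j : Fin n),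
      g p ⟨2 * (j : ℕ), by have := j.isLt; omega⟩ = p.1 j := by
    intro p j
    have hjn := j.isLt
    simp only [hg, Fin.val_mk]
    rw [dif_neg (by omega), if_pos (by omega)]
    have hidx : (⟨2 * (j : ℕ) / 2, by omega⟩ : Fin n) = j := by
      refine Fin.ext ?_
      simp only [Fin.val_mk]
      omega
    rw [hidx]
  have hgodd : ∀ (p : (Fin n → F) × F) (j : Fin n),
      g p ⟨2 * (j : ℕ) + 1, by have := j.isLt; omega⟩ = i * p.1 j := by
    intro p j
    have hjn := j.isLt
    simp only [hg, Fin.val_mk]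
    rw [dif_neg (by omega), if_neg (by omega)]
    have hidx : (⟨(2 * (j : ℕ) + 1) / 2, by omega⟩ : Fin n) = j := by
      refine Fin.ext ?_
      simp only [Fin.val_mk]
      omega
    rw [hidx]
  have hgE : ∀ p, g p ∈ E := fun p => (hmem _).mpr fun j => by rw [hgodd p j, hgeven p j]
  have hEeq : E = Set.range g := by
    apply Set.Subset.antisymm
    · intro x hx
      rw [hE] at hx
      obtain ⟨t, s, ht, hs⟩ := hx
      refine ⟨(t, s), ?_⟩
      funext j
      by_cases hj : (j : ℕ) = 2 * n
      · have hjeq : j = ⟨2 * n, by omega⟩ := Fin.ext hj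
        rw [hjeq, hg2n]
        exact hs.symm
      · by_cases hp : (j : ℕ) % 2 = 0
        · set m : Fin n := ⟨(j : ℕ) / 2, by have := j.isLt; omega⟩ with hm
          have hjm : j = ⟨2 * (m : ℕ), by have := m.isLt; omega⟩ := Fin.ext (by simp [hm]; omega)
          rw [hjm, hgeven]
          exact ((ht m).1).symm
        · set m : Fin n := ⟨(j : ℕ) / 2, by have := j.isLt; omega⟩ with hm
          have hjm : j = ⟨2 * (m : ℕ) + 1, by have := m.isLt; omega⟩ :=
            Fin.ext (by simp [hm]; omega)
          rw [hjm, hgodd]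
          exact ((ht m).2).symm
    · rintro _ ⟨p, rfl⟩
      exact hgE p
  have hginj : Function.Injective g := by
    intro p p' hpp
    have h2 : p.2 = p'.2 := by rw [← hg2n p, ← hg2n p', hpp]
    have h1 : p.1 = p'.1 := funext fun j => by rw [← hgeven p j, ← hgeven p' j, hpp]
    exact Prod.ext h1 h2
  have hcardE : Nat.card E = q ^ (n + 1) := by
    rw [hEeq, Nat.card_range_of_injective hginj, Nat.card_eq_fintype_card,
      Fintype.card_prod, Fintype.card_fun, Fintype.card_fin, ← hq, pow_succ]
  -- the resultant set
  have hD : Delta k E = {u : F | ∃ σ : F, u = σ ^ 2} := by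
    ext u
    constructor
    · rintro ⟨y, x, hy, hx, rfl⟩
      have hz : y - ∑ l, x l ∈ E := by
        rw [hmem]
        intro j
        have hyj := (hmem y).mp hy j
        simp only [Pi.sub_apply, Finset.sum_apply]
        rw [hyj, Finset.sum_congr rfl fun l _ => (hmem (x l)).mp (hx l) j,
          mul_sub, Finset.mul_sum]
      exact ⟨_, (hnorm _ hz)⟩
    · rintro ⟨σ, rfl⟩
      set y : Fin (2 * n + 1) → F := fun j => if (j : ℕ) = 2 * n then σ else 0 with hy
      have hyE : y ∈ E := (hmem y).mpr fun j => by
        have := j.isLt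
        show (if _ then σ else 0) = i * (if _ then σ else 0)
        rw [if_neg (by (try simp only [Fin.val_mk]); omega), if_neg (by (try simp only [Fin.val_mk]); omega),
          mul_zero]
      have h0E : (0 : Fin (2 * n + 1) → F) ∈ E := (hmem 0).mpr fun j => by
        simp
      refine ⟨y, fun _ => 0, hyE, fun _ => h0E, ?_⟩
      have hsub : y - ∑ _l : Fin (k - 1), (0 : Fin (2 * n + 1) → F) = y := by simp
      rw [hsub, hnorm y hyE]
      show (if _ then σ else 0) ^ 2 = σ ^ 2
      rw [if_pos rfl]
  have hq3 : 3 ≤ q := by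
    have h1 : 1 < Fintype.card F := Fintype.one_lt_card
    obtain ⟨m, hm⟩ := hodd
    omega
  have hcsq := aux_card_squares F h2F
  refine ⟨hcardE, hD, ?_, by omega, ?_⟩
  · rw [hD, hcsq, ← hq]
  · intro hcon
    have hcard : Nat.card (Delta k E) = Fintype.card F := by
      rw [hcon, Nat.card_coe_set_eq, Set.ncard_univ, Nat.card_eq_fintype_card]
    rw [hD, hcsq] at hcard
    omega
end

section
/- Let q be a power of an odd prime, let d = 2m ≥ 2 be an even integer, let k ≥ 2 be an integer, and suppose there exists i ∈ F_q with i² = −1. Let E = {(t_1, i t_1, t_2, i t_2, …, t_m, i t_m) : t_1, …, t_m ∈ F_q} ⊆ F_q^d. Then |E| = q^{d/2} and Δ_k(E) = {0}. -/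
open Finset

private def pairEquiv (m : ℕ) : Fin m × Fin 2 ≃ Fin (2 * m) where
  toFun p := ⟨2 * p.1.val + p.2.val, by have := p.1.isLt; have := p.2.isLt; omega⟩
  invFun n := (⟨n.val / 2, by have := n.isLt; omega⟩, ⟨n.val % 2, by omega⟩)
  left_inv p := by
    have h1 := p.1.isLt; have h2 := p.2.isLt
    refine Prod.ext (Fin.ext ?_) (Fin.ext ?_)
    · show (2 * p.1.val + p.2.val) / 2 = p.1.val; omega
    · show (2 * p.1.val + p.2.val) % 2 = p.2.val; omega
  right_inv n := by
    apply Fin.ext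
    show 2 * (n.val / 2) + n.val % 2 = n.val
    omega

/-- for even `d = 2m ≥ 2`, `k ≥ 2`, and `i² = -1`, the set
`E = {(t₁, it₁, …, t_m, it_m)}` has `|E| = q^{d/2}` and `Δ_k(E) = {0}`. -/
theorem stmt_1 {F : Type*} [Field F] [Fintype F] (q m k : ℕ)
    (hq : q = Fintype.card F) (hodd : Odd q) (hm : 1 ≤ m) (hk : 2 ≤ k)
    (i : F) (hi : i ^ 2 = -1)
    (E : Set (Fin (2 * m) → F))
    (hE : E = {x | ∃ t : Fin m → F,
      ∀ j : Fin m, x ⟨2 * (j : ℕ), by have := j.isLt; omega⟩ = t j ∧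
        x ⟨2 * (j : ℕ) + 1, by have := j.isLt; omega⟩ = i * t j}) :
    Nat.card E = q ^ m ∧ Delta k E = {0} := by
  subst hq
  have hmem : ∀ x, x ∈ E ↔ ∃ t : Fin m → F, ∀ j : Fin m,
      x ⟨2 * (j : ℕ), by have := j.isLt; omega⟩ = t j ∧
        x ⟨2 * (j : ℕ) + 1, by have := j.isLt; omega⟩ = i * t j := by
    intro x; rw [hE]; exact Iff.rfl
  have hmem2 : ∀ t : Fin m → F,
      (fun n : Fin (2*m) => if n.val % 2 = 0 then t ⟨n.val/2, by have := n.isLt; omega⟩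
        else i * t ⟨n.val/2, by have := n.isLt; omega⟩) ∈ E := by
    intro t
    rw [hmem]
    refine ⟨t, fun j => ⟨?_, ?_⟩⟩ <;> simp only [Fin.val_mk]
    · rw [if_pos (Nat.mul_mod_right 2 (j : ℕ))]
      congr 1
      apply Fin.ext
      simp only [Fin.val_mk]
      omega
    · rw [if_neg (by omega)]
      congr 2
      apply Fin.ext
      simp only [Fin.val_mk]
      omega
  have hzero : (0 : Fin (2*m) → F) ∈ E := by
    rw [hmem]; exact ⟨0, fun j => by simp⟩
  have hsub : ∀ x ∈ E, ∀ y ∈ E, x - y ∈ E := by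
    intro x hx y hy
    rw [hmem] at hx hy ⊢
    obtain ⟨t, ht⟩ := hx
    obtain ⟨s, hs⟩ := hy
    refine ⟨t - s, fun j => ?_⟩
    have h1 := ht j; have h2 := hs j
    constructor
    · simp [Pi.sub_apply, h1.1, h2.1]
    · simp [Pi.sub_apply, h1.2, h2.2]; ring
  have hadd : ∀ x ∈ E, ∀ y ∈ E, x + y ∈ E := by
    intro x hx y hy
    rw [hmem] at hx hy ⊢
    obtain ⟨t, ht⟩ := hx
    obtain ⟨s, hs⟩ := hy
    refine ⟨t + s, fun j => ?_⟩
    have h1 := ht j; have h2 := hs j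
    constructor
    · simp [Pi.add_apply, h1.1, h2.1]
    · simp [Pi.add_apply, h1.2, h2.2]; ring
  have hnorm : ∀ x ∈ E, normF x = 0 := by
    intro x hx
    rw [hmem] at hx
    obtain ⟨t, ht⟩ := hx
    have hrw : normF x = ∑ p : Fin m × Fin 2, x (pairEquiv m p) ^ 2 :=
      (Fintype.sum_equiv (pairEquiv m) (fun p => x (pairEquiv m p) ^ 2)
        (fun n => x n ^ 2) (fun p => rfl)).symm
    rw [hrw, Fintype.sum_prod_type]
    have key : ∀ j : Fin m, ∑ b : Fin 2, x (pairEquiv m (j, b)) ^ 2 = 0 := by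
      intro j
      rw [Fin.sum_univ_two]
      have h1 : x (pairEquiv m (j, 0)) = t j := by
        have h := (ht j).1
        rw [← h]
        congr 1
      have h2 : x (pairEquiv m (j, 1)) = i * t j := by
        have h := (ht j).2
        rw [← h]
        congr 1
      rw [h1, h2, mul_pow, hi]; ring
    simp [key]
  constructor
  · have eqv : E ≃ (Fin m → F) :=
      { toFun := fun x => fun j => x.1 ⟨2 * (j : ℕ), by have := j.isLt; omega⟩
        invFun := fun t => ⟨_, hmem2 t⟩
        left_inv := by
          rintro ⟨x, hx⟩
          rw [hmem] at hx
          obtain ⟨t, ht⟩ := hx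
          apply Subtype.ext
          funext n
          simp only [Fin.val_mk]
          have h1 := (ht ⟨n.val / 2, by have := n.isLt; omega⟩).1
          have h2 := (ht ⟨n.val / 2, by have := n.isLt; omega⟩).2
          simp only [Fin.val_mk] at h1 h2
          by_cases h : n.val % 2 = 0
          · rw [if_pos h]
            have hx' : x n = x ⟨2 * (n.val / 2), by have := n.isLt; omega⟩ := by
              congr 1
              apply Fin.ext
              simp only [Fin.val_mk]
              omega
            rw [hx']
          · rw [if_neg h]
            have hx' : x n = x ⟨2 * (n.val / 2) + 1, by have := n.isLt; omega⟩ := by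
              congr 1
              apply Fin.ext
              simp only [Fin.val_mk]
              omega
            rw [hx', h1]
            exact h2.symm
        right_inv := by
          intro t
          funext j
          simp only [Fin.val_mk]
          rw [if_pos (Nat.mul_mod_right 2 (j : ℕ))]
          congr 1
          apply Fin.ext
          simp only [Fin.val_mk]
          omega }
    rw [Nat.card_congr eqv, Nat.card_eq_fintype_card, Fintype.card_fun, Fintype.card_fin]
  · ext u
    simp only [Set.mem_singleton_iff]
    constructor
    · rintro ⟨y, x, hy, hx, hn⟩
      have hsum : (∑ j, x j) ∈ E := by
        apply Finset.sum_induction x (· ∈ E) (fun a b ha hb => hadd a ha b hb) hzero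
        intro j _; exact hx j
      rw [← hn]
      exact hnorm _ (hsub y hy _ hsum)
    · rintro rfl
      refine ⟨0, fun _ => 0, hzero, fun _ => hzero, ?_⟩
      have hz : (0 : Fin (2*m) → F) - ∑ _j : Fin (k-1), (0 : Fin (2*m) → F) = 0 := by simp
      rw [hz]
      simp [normF]
end

section
/- For every integer d ≥ 2, every even integer k ≥ 4, and all constants c_1, c_2, c_3 > 0, there exists a constant C > 0 such that for every power q of an odd prime, every (c_1,c_2,c_3)-regular set V ⊆ F_q^d, and every E ⊆ V, one has Λ_k(E) ≤ C ( q^{d−1} Λ_{k−2}(E) + q^{−1} |E|^{k−1} ). -/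
open Finset

section Aux

open scoped Classical

set_option linter.unusedSectionVars false

variable {F : Type} [Field F] [Fintype F]

private lemma addChar_map_sum {ι : Type*} (χ : AddChar F ℂ) (s : Finset ι) (f : ι → F) :
    χ (∑ i ∈ s, f i) = ∏ i ∈ s, χ (f i) := by
  classical
  induction s using Finset.induction_on with
  | empty => simp
  | @insert _ _ h ih => rw [Finset.sum_insert h, Finset.prod_insert h, AddChar.map_add_eq_mul, ih]

private lemma sum_char_single (χ : AddChar F ℂ) (hχ : χ ≠ 1) (t : F) :
    ∑ a : F, χ (a * t) = if t = 0 then (Fintype.card F : ℂ) else 0 := by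
  rcases eq_or_ne t 0 with rfl | ht
  · simp [mul_zero]
  · rw [if_neg ht]
    calc ∑ a : F, χ (a * t) = ∑ a : F, χ a :=
          Fintype.sum_equiv (Equiv.mulRight₀ t ht) _ _ (fun a => rfl)
    _ = 0 := AddChar.sum_eq_zero_of_ne_one hχ

variable {d : ℕ}

private def dotF (η x : Fin d → F) : F := ∑ i, η i * x i

private lemma dotF_add (η x y : Fin d → F) : dotF η (x + y) = dotF η x + dotF η y := by
  simp [dotF, mul_add, Finset.sum_add_distrib]

private lemma dotF_sub (η x y : Fin d → F) : dotF η (x - y) = dotF η x - dotF η y := by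
  simp [dotF, mul_sub, Finset.sum_sub_distrib]

private lemma dotF_sum {ι : Type*} (η : Fin d → F) (s : Finset ι) (p : ι → Fin d → F) :
    dotF η (∑ i ∈ s, p i) = ∑ i ∈ s, dotF η (p i) := by
  classical
  induction s using Finset.induction_on with
  | empty => simp [dotF]
  | @insert _ _ h ih => rw [Finset.sum_insert h, dotF_add, ih, Finset.sum_insert h]

private lemma sum_char_dot (χ : AddChar F ℂ) (hχ : χ ≠ 1) (t : Fin d → F) :
    ∑ η : Fin d → F, χ (dotF η t) = if t = 0 then (Fintype.card F : ℂ) ^ d else 0 := by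
  have h1 : ∀ η : Fin d → F, χ (dotF η t) = ∏ i, χ (η i * t i) := fun η =>
    addChar_map_sum χ _ _
  simp_rw [h1]
  have h2 : ∑ η : Fin d → F, ∏ i, χ (η i * t i) = ∏ i, ∑ a : F, χ (a * t i) := by
    rw [show (univ : Finset (Fin d → F)) = Fintype.piFinset (fun _ => univ) from
      (Fintype.piFinset_univ).symm]
    exact (Finset.prod_univ_sum (fun _ => univ) (fun i a => χ (a * t i))).symm
  rw [h2]
  simp_rw [sum_char_single χ hχ]
  rcases eq_or_ne t 0 with rfl | ht
  · simp
  · rw [if_neg ht]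
    obtain ⟨i, hi⟩ : ∃ i, t i ≠ 0 := by
      by_contra h; push_neg at h; exact ht (funext h)
    exact Finset.prod_eq_zero (Finset.mem_univ i) (by simp [hi])

private lemma sum_pi_char (χ : AddChar F ℂ) (E' : Finset (Fin d → F)) (mm : ℕ) (η : Fin d → F) :
    ∑ p ∈ Fintype.piFinset (fun _ : Fin mm => E'), χ (dotF η (∑ i, p i)) =
      (∑ x ∈ E', χ (dotF η x)) ^ mm := by
  rw [Finset.sum_pow']
  refine Finset.sum_congr rfl fun p _ => ?_
  rw [dotF_sum, addChar_map_sum]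

private lemma sum_pi_succ {β : Type*} [AddCommMonoid β] (E' : Finset (Fin d → F)) (n : ℕ)
    (f : (Fin d → F) → β) :
    ∑ p ∈ Fintype.piFinset (fun _ : Fin (n + 1) => E'), f (∑ i, p i) =
      ∑ x ∈ E', ∑ a ∈ Fintype.piFinset (fun _ : Fin n => E'), f (x + ∑ i, a i) := by
  classical
  rw [← Finset.sum_product']
  refine Finset.sum_nbij' (fun p => (p 0, Fin.tail p)) (fun q => Fin.cons q.1 q.2)
    ?_ ?_ ?_ ?_ ?_
  · intro p hp
    simp only [Fintype.mem_piFinset] at hp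
    simp only [Finset.mem_product, Fintype.mem_piFinset]
    exact ⟨hp 0, fun i => hp i.succ⟩
  · intro q hq
    simp only [Finset.mem_product, Fintype.mem_piFinset] at hq
    simp only [Fintype.mem_piFinset]
    intro i
    refine Fin.cases ?_ ?_ i
    · simpa using hq.1
    · intro j; simpa using hq.2 j
  · intro p _; exact Fin.cons_self_tail p
  · intro q _; simp
  · intro p _
    congr 1
    rw [Fin.sum_univ_succ]
    rfl

private lemma energy_eq_sum (m : ℕ) (E : Set (Fin d → F)) :
    energy m E =
      ∑ p1 ∈ Fintype.piFinset (fun _ : Fin m => E.toFinite.toFinset),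
        ∑ p2 ∈ Fintype.piFinset (fun _ : Fin m => E.toFinite.toFinset),
          (if (∑ i, p1 i) = ∑ i, p2 i then 1 else 0) := by
  classical
  have hP : Fintype.piFinset (fun _ : Fin m => E.toFinite.toFinset) =
      univ.filter (fun p : Fin m → Fin d → F => ∀ i, p i ∈ E) := by
    ext p; simp [Fintype.mem_piFinset, Set.Finite.mem_toFinset]
  rw [energy, Nat.card_eq_fintype_card, Fintype.card_subtype, Finset.card_filter, hP]
  rw [Fintype.sum_prod_type]
  simp only [Finset.sum_filter]
  refine Finset.sum_congr rfl fun p1 _ => ?_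
  by_cases hA : ∀ i, p1 i ∈ E
  · rw [if_pos hA]
    refine Finset.sum_congr rfl fun p2 _ => ?_
    split_ifs <;> tauto
  · rw [if_neg hA]
    exact Finset.sum_eq_zero fun p2 _ => by rw [if_neg (by tauto)]

end Aux

set_option maxHeartbeats 1000000 in
/-- for `d ≥ 2`, even `k ≥ 4` and `c₁, c₂, c₃ > 0` there is `C > 0` such that
for every odd prime power `q`, every `(c₁,c₂,c₃)`-regular `V ⊆ 𝔽_q^d` and every `E ⊆ V`,
`Λ_k(E) ≤ C (q^{d-1} Λ_{k-2}(E) + q^{-1} |E|^{k-1})`. -/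
theorem stmt_10 (d k : ℕ) (hd : 2 ≤ d) (hk : 4 ≤ k) (hke : Even k)
    (c1 c2 c3 : ℝ) (hc1 : 0 < c1) (hc2 : 0 < c2) (hc3 : 0 < c3) :
    ∃ C : ℝ, 0 < C ∧
      ∀ (F : Type) [Field F] [Fintype F], Odd (Fintype.card F) →
        ∀ χ : AddChar F ℂ, χ ≠ 1 →
          ∀ V : Set (Fin d → F), IsRegularVariety c1 c2 c3 χ V →
            ∀ E : Set (Fin d → F), E ⊆ V →
              (energy (k / 2) E : ℝ) ≤
                C * ((Fintype.card F : ℝ) ^ (d - 1) * (energy ((k - 2) / 2) E : ℝ) +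
                  (Nat.card E : ℝ) ^ (k - 1) / (Fintype.card F : ℝ)) := by
  classical
  obtain ⟨mh, hkm⟩ := hke
  obtain ⟨n, rfl⟩ : ∃ n, mh = n + 1 := ⟨mh - 1, by omega⟩
  have hk2 : k / 2 = n + 1 := by omega
  have hk22 : (k - 2) / 2 = n := by omega
  have hk1 : k - 1 = 2 * n + 1 := by omega
  have hd1 : 1 ≤ d := by omega
  have hdd : d = (d-1)+1 := (Nat.sub_add_cancel hd1).symm
  refine ⟨2 * c2 + c3 ^ 2, by positivity, ?_⟩
  intro F _ _ hodd χ hχ V hV E hEV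
  rw [hk2, hk22, hk1]
  set q := Fintype.card F with hq
  have hQ : (0 : ℝ) < (q : ℝ) := by
    have : 0 < q := Fintype.card_pos
    exact_mod_cast this
  have hQne : (q : ℝ) ≠ 0 := ne_of_gt hQ
  set E' := E.toFinite.toFinset with hE'
  set V' := V.toFinite.toFinset with hV'
  have hsub : E' ⊆ V' := by
    intro x hx
    rw [hE', Set.Finite.mem_toFinset] at hx
    rw [hV', Set.Finite.mem_toFinset]
    exact hEV hx
  -- Fourier coefficients
  have hTnn : ∀ η : Fin d → F, (0:ℝ) ≤ ‖∑ x ∈ E', χ (dotF η x)‖ :=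
    fun η => norm_nonneg _
  -- energy identity
  have hC : ∀ mm : ℕ, ((q:ℂ))^d * (energy mm E : ℂ) =
      ∑ η : Fin d → F, (∑ x ∈ E', χ (dotF η x))^mm *
        (starRingEnd ℂ) ((∑ x ∈ E', χ (dotF η x))^mm) := by
    intro mm
    have he : (energy mm E : ℂ) =
        ∑ p1 ∈ Fintype.piFinset (fun _ : Fin mm => E'),
          ∑ p2 ∈ Fintype.piFinset (fun _ : Fin mm => E'),
            (if (∑ i, p1 i) = (∑ i, p2 i) then (1:ℂ) else 0) := by
      rw [energy_eq_sum]
      push_cast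
      rfl
    have hterm : ∀ p1 p2 : Fin mm → Fin d → F,
        ((q:ℂ))^d * (if (∑ i, p1 i) = (∑ i, p2 i) then (1:ℂ) else 0)
          = ∑ η : Fin d → F, χ (dotF η (∑ i, p1 i - ∑ i, p2 i)) := by
      intro p1 p2
      rw [sum_char_dot χ hχ]
      rcases eq_or_ne (∑ i, p1 i) (∑ i, p2 i) with h | h
      · rw [if_pos h, if_pos (by rw [h, sub_self]), mul_one]
      · rw [if_neg h, if_neg (fun hc => h (sub_eq_zero.mp hc)), mul_zero]
    have hfac : ∀ η : Fin d → F,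
        (∑ x ∈ E', χ (dotF η x))^mm * (starRingEnd ℂ) ((∑ x ∈ E', χ (dotF η x))^mm)
          = ∑ p1 ∈ Fintype.piFinset (fun _ : Fin mm => E'),
              ∑ p2 ∈ Fintype.piFinset (fun _ : Fin mm => E'),
                χ (dotF η (∑ i, p1 i - ∑ i, p2 i)) := by
      intro η
      rw [← sum_pi_char χ E' mm η, map_sum]
      rw [Finset.sum_mul_sum]
      refine Finset.sum_congr rfl fun p1 _ => Finset.sum_congr rfl fun p2 _ => ?_
      rw [← AddChar.map_neg_eq_conj, ← AddChar.map_add_eq_mul, dotF_sub, ← sub_eq_add_neg]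
    calc ((q:ℂ))^d * (energy mm E : ℂ)
        = ∑ p1 ∈ Fintype.piFinset (fun _ : Fin mm => E'),
            ∑ p2 ∈ Fintype.piFinset (fun _ : Fin mm => E'),
              ∑ η : Fin d → F, χ (dotF η (∑ i, p1 i - ∑ i, p2 i)) := by
          rw [he, Finset.mul_sum]
          refine Finset.sum_congr rfl fun p1 _ => ?_
          rw [Finset.mul_sum]
          exact Finset.sum_congr rfl fun p2 _ => hterm p1 p2
      _ = ∑ η : Fin d → F,
            ∑ p1 ∈ Fintype.piFinset (fun _ : Fin mm => E'),
              ∑ p2 ∈ Fintype.piFinset (fun _ : Fin mm => E'),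
                χ (dotF η (∑ i, p1 i - ∑ i, p2 i)) := by
          exact Eq.trans (Finset.sum_congr rfl fun p1 _ => Finset.sum_comm) Finset.sum_comm
      _ = _ := Finset.sum_congr rfl fun η _ => (hfac η).symm
  have energyR : ∀ mm : ℕ, ((q:ℝ))^d * (energy mm E : ℝ) =
      ∑ η : Fin d → F, (‖∑ x ∈ E', χ (dotF η x)‖)^(2*mm) := by
    intro mm
    have h2 : ((q:ℂ))^d * (energy mm E : ℂ) =
        ((∑ η : Fin d → F, (‖∑ x ∈ E', χ (dotF η x)‖)^(2*mm) : ℝ) : ℂ) := by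
      rw [hC mm]
      push_cast
      refine Finset.sum_congr rfl fun η _ => ?_
      rw [Complex.mul_conj, Complex.normSq_eq_norm_sq, norm_pow, ← pow_mul, mul_comm mm 2]
      norm_num
    exact_mod_cast h2
  -- the V-relaxed count
  set NV : ℕ := ∑ x ∈ V', ∑ a ∈ Fintype.piFinset (fun _ : Fin n => E'),
      ∑ b ∈ Fintype.piFinset (fun _ : Fin (n+1) => E'),
        (if x + ∑ i, a i = ∑ i, b i then 1 else 0) with hNV
  have hE_le : energy (n+1) E ≤ NV := by
    rw [energy_eq_sum]
    have e1 := sum_pi_succ (β := ℕ) E' n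
      (fun s => ∑ b ∈ Fintype.piFinset (fun _ : Fin (n+1) => E'),
        (if s = ∑ i, b i then 1 else 0))
    rw [e1, hNV]
    refine Finset.sum_le_sum_of_subset hsub
  -- complex identity for NV
  have hNVC : ((q:ℂ))^d * (NV : ℂ) =
      ∑ η : Fin d → F, (∑ v ∈ V', χ (dotF η v)) *
        ((∑ x ∈ E', χ (dotF η x))^n *
          (starRingEnd ℂ) ((∑ x ∈ E', χ (dotF η x))^(n+1))) := by
    have hcast : (NV : ℂ) = ∑ x ∈ V', ∑ a ∈ Fintype.piFinset (fun _ : Fin n => E'),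
        ∑ b ∈ Fintype.piFinset (fun _ : Fin (n+1) => E'),
          (if x + ∑ i, a i = ∑ i, b i then (1:ℂ) else 0) := by
      rw [hNV]; push_cast; rfl
    have hterm : ∀ (x : Fin d → F) (a : Fin n → Fin d → F) (b : Fin (n+1) → Fin d → F),
        ((q:ℂ))^d * (if x + ∑ i, a i = ∑ i, b i then (1:ℂ) else 0)
          = ∑ η : Fin d → F, χ (dotF η (x + ∑ i, a i - ∑ i, b i)) := by
      intro x a b
      rw [sum_char_dot χ hχ]
      rcases eq_or_ne (x + ∑ i, a i) (∑ i, b i) with h | h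
      · rw [if_pos h, if_pos (by rw [h, sub_self]), mul_one]
      · rw [if_neg h, if_neg (fun hc => h (sub_eq_zero.mp hc)), mul_zero]
    have hfac : ∀ η : Fin d → F,
        (∑ v ∈ V', χ (dotF η v)) * ((∑ x ∈ E', χ (dotF η x))^n *
          (starRingEnd ℂ) ((∑ x ∈ E', χ (dotF η x))^(n+1)))
          = ∑ x ∈ V', ∑ a ∈ Fintype.piFinset (fun _ : Fin n => E'),
              ∑ b ∈ Fintype.piFinset (fun _ : Fin (n+1) => E'),
                χ (dotF η (x + ∑ i, a i - ∑ i, b i)) := by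
      intro η
      rw [← sum_pi_char χ E' n η, ← sum_pi_char χ E' (n+1) η, map_sum]
      rw [Finset.sum_mul_sum, Finset.sum_mul]
      refine Finset.sum_congr rfl fun x _ => ?_
      rw [Finset.mul_sum]
      refine Finset.sum_congr rfl fun a _ => ?_
      rw [Finset.mul_sum]
      refine Finset.sum_congr rfl fun b _ => ?_
      rw [← AddChar.map_neg_eq_conj, ← AddChar.map_add_eq_mul, ← AddChar.map_add_eq_mul]
      congr 1
      rw [dotF_sub, dotF_add]
      ring
    calc ((q:ℂ))^d * (NV : ℂ)
        = ∑ x ∈ V', ∑ a ∈ Fintype.piFinset (fun _ : Fin n => E'),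
            ∑ b ∈ Fintype.piFinset (fun _ : Fin (n+1) => E'),
              ∑ η : Fin d → F, χ (dotF η (x + ∑ i, a i - ∑ i, b i)) := by
          rw [hcast, Finset.mul_sum]
          refine Finset.sum_congr rfl fun x _ => ?_
          rw [Finset.mul_sum]
          refine Finset.sum_congr rfl fun a _ => ?_
          rw [Finset.mul_sum]
          exact Finset.sum_congr rfl fun b _ => hterm x a b
      _ = ∑ η : Fin d → F, ∑ x ∈ V', ∑ a ∈ Fintype.piFinset (fun _ : Fin n => E'),
            ∑ b ∈ Fintype.piFinset (fun _ : Fin (n+1) => E'),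
              χ (dotF η (x + ∑ i, a i - ∑ i, b i)) := by
          refine Eq.trans (Finset.sum_congr rfl fun x _ =>
            Eq.trans (Finset.sum_congr rfl fun a _ => Finset.sum_comm) Finset.sum_comm)
            Finset.sum_comm
      _ = _ := Finset.sum_congr rfl fun η _ => (hfac η).symm
  -- pointwise bounds
  have hTle : ∀ η : Fin d → F, ‖∑ x ∈ E', χ (dotF η x)‖ ≤ (E'.card : ℝ) := by
    intro η
    refine le_trans (norm_sum_le _ _) ?_
    rw [show ∑ x ∈ E', ‖χ (dotF η x)‖ = ∑ x ∈ E', (1:ℝ) from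
      Finset.sum_congr rfl fun x _ => by rw [AddChar.norm_apply]]
    simp
  have hSV0 : ‖∑ v ∈ V', χ (dotF (0 : Fin d → F) v)‖ ≤ (V'.card : ℝ) := by
    refine le_trans (norm_sum_le _ _) ?_
    rw [show ∑ v ∈ V', ‖χ (dotF (0 : Fin d → F) v)‖ = ∑ v ∈ V', (1:ℝ) from
      Finset.sum_congr rfl fun v _ => by rw [AddChar.norm_apply]]
    simp
  have hqpow : ((q:ℝ))^d * (q:ℝ) ^ (-(((d:ℝ)+1)/2)) = (q:ℝ) ^ (((d:ℝ)-1)/2) := by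
    rw [← Real.rpow_natCast (q:ℝ) d, ← Real.rpow_add hQ]
    congr 1
    ring
  have hqdne : ((q:ℂ))^d ≠ 0 := pow_ne_zero _ (Nat.cast_ne_zero.mpr Fintype.card_pos.ne')
  have hSVne : ∀ η : Fin d → F, η ≠ 0 →
      ‖∑ v ∈ V', χ (dotF η v)‖ ≤ c3 * (q:ℝ) ^ (((d:ℝ)-1)/2) := by
    intro η hη
    have hconn : ∀ ξ : Fin d → F, ftF χ V ξ = ((q:ℂ)^d)⁻¹ * ∑ v ∈ V', χ (dotF (-ξ) v) := by
      intro ξ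
      rw [ftF]
      congr 1
      have hVfil : V' = univ.filter (· ∈ V) := by
        ext v; simp [hV', Set.Finite.mem_toFinset]
      have hind : ∑ x : Fin d → F, Set.indicator V (fun y => χ (-(∑ i, ξ i * y i))) x
          = ∑ v ∈ V', χ (-(∑ i, ξ i * v i)) := by
        rw [hVfil, Finset.sum_filter]
        refine Finset.sum_congr rfl fun x _ => ?_
        rw [Set.indicator_apply]
      rw [hind]
      refine Finset.sum_congr rfl fun v _ => ?_
      congr 1
      simp [dotF, neg_mul]
    have h1 : (∑ v ∈ V', χ (dotF η v)) = (q:ℂ)^d * ftF χ V (-η) := by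
      rw [hconn (-η), neg_neg, ← mul_assoc, mul_inv_cancel₀ hqdne, one_mul]
    rw [h1, norm_mul, norm_pow, Complex.norm_natCast]
    calc (q:ℝ)^d * ‖ftF χ V (-η)‖
        ≤ (q:ℝ)^d * (c3 * (q:ℝ) ^ (-(((d:ℝ)+1)/2))) :=
          mul_le_mul_of_nonneg_left (hV.2.2 (-η) (neg_ne_zero.mpr hη)) (by positivity)
      _ = c3 * ((q:ℝ)^d * (q:ℝ) ^ (-(((d:ℝ)+1)/2))) := by ring
      _ = c3 * (q:ℝ) ^ (((d:ℝ)-1)/2) := by rw [hqpow]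
  set A : ℝ := c3 * (q:ℝ) ^ (((d:ℝ)-1)/2) with hA
  have hApos : 0 < A := by
    have := Real.rpow_pos_of_pos hQ (((d:ℝ)-1)/2)
    positivity
  have hamgm : ∀ x y : ℝ, x * y ≤ (A * x^2 + A⁻¹ * y^2)/2 := by
    intro x y
    have h0 : 0 ≤ A⁻¹ * (A*x - y)^2 := by positivity
    have hexp : A⁻¹ * (A*x - y)^2 = A*x^2 + A⁻¹*y^2 - 2*(x*y) := by
      field_simp
      ring
    rw [hexp] at h0
    linarith
  -- master inequality
  have hEnn : (0:ℝ) ≤ (energy n E : ℝ) := Nat.cast_nonneg _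
  have hEnn1 : (0:ℝ) ≤ (energy (n+1) E : ℝ) := Nat.cast_nonneg _
  have step1 : ((q:ℝ))^d * (energy (n+1) E : ℝ) ≤ ((q:ℝ))^d * (NV : ℝ) := by
    refine mul_le_mul_of_nonneg_left ?_ (by positivity)
    exact_mod_cast hE_le
  have step2 : ((q:ℝ))^d * (NV : ℝ) ≤
      ∑ η : Fin d → F, ‖∑ v ∈ V', χ (dotF η v)‖ *
        (‖∑ x ∈ E', χ (dotF η x)‖ ^ n *
          ‖∑ x ∈ E', χ (dotF η x)‖ ^ (n+1)) := by
    have h0 : ((q:ℝ))^d * (NV : ℝ) = ‖((q:ℂ))^d * (NV : ℂ)‖ := by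
      rw [norm_mul, norm_pow, Complex.norm_natCast, Complex.norm_natCast]
    rw [h0, hNVC]
    refine le_trans (norm_sum_le _ _) (le_of_eq (Finset.sum_congr rfl fun η _ => ?_))
    rw [norm_mul, norm_mul, norm_pow, Complex.norm_conj, norm_pow]
  have step3 : ∑ η : Fin d → F, ‖∑ v ∈ V', χ (dotF η v)‖ *
        (‖∑ x ∈ E', χ (dotF η x)‖ ^ n *
          ‖∑ x ∈ E', χ (dotF η x)‖ ^ (n+1))
      ≤ ((A^2/2) * (((q:ℝ))^d * (energy n E : ℝ))
          + (1/2) * (((q:ℝ))^d * (energy (n+1) E : ℝ)))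
        + (V'.card : ℝ) * (E'.card : ℝ)^(2*n+1) := by
    rw [← Finset.sum_erase_add _ _ (Finset.mem_univ (0 : Fin d → F))]
    have hzero : ‖∑ v ∈ V', χ (dotF (0:Fin d → F) v)‖ *
        (‖∑ x ∈ E', χ (dotF (0:Fin d → F) x)‖ ^ n *
          ‖∑ x ∈ E', χ (dotF (0:Fin d → F) x)‖ ^ (n+1))
        ≤ (V'.card : ℝ) * (E'.card : ℝ)^(2*n+1) := by
      have h1 : ‖∑ x ∈ E', χ (dotF (0:Fin d → F) x)‖ ^ n *
          ‖∑ x ∈ E', χ (dotF (0:Fin d → F) x)‖ ^ (n+1)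
          ≤ (E'.card : ℝ)^n * (E'.card : ℝ)^(n+1) := by
        refine mul_le_mul (pow_le_pow_left₀ (hTnn _) (hTle _) n)
          (pow_le_pow_left₀ (hTnn _) (hTle _) (n+1)) (by positivity) (pow_nonneg (Nat.cast_nonneg _) _)
      refine le_trans (mul_le_mul hSV0 h1 (by positivity) (Nat.cast_nonneg _)) ?_
      rw [← pow_add, show n + (n+1) = 2*n+1 from by ring]
    have herase : ∑ η ∈ (univ : Finset (Fin d → F)).erase 0,
        ‖∑ v ∈ V', χ (dotF η v)‖ *
          (‖∑ x ∈ E', χ (dotF η x)‖ ^ n *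
            ‖∑ x ∈ E', χ (dotF η x)‖ ^ (n+1))
        ≤ (A^2/2) * (((q:ℝ))^d * (energy n E : ℝ))
          + (1/2) * (((q:ℝ))^d * (energy (n+1) E : ℝ)) := by
      have hbnd : ∀ η ∈ (univ : Finset (Fin d → F)).erase 0,
          ‖∑ v ∈ V', χ (dotF η v)‖ *
            (‖∑ x ∈ E', χ (dotF η x)‖ ^ n *
              ‖∑ x ∈ E', χ (dotF η x)‖ ^ (n+1))
          ≤ (A^2/2) * ‖∑ x ∈ E', χ (dotF η x)‖ ^ (2*n)
            + (1/2) * ‖∑ x ∈ E', χ (dotF η x)‖ ^ (2*(n+1)) := by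
        intro η hη
        have hη0 : η ≠ 0 := Finset.ne_of_mem_erase hη
        set t := ‖∑ x ∈ E', χ (dotF η x)‖ with ht
        have h2 : t^n * t^(n+1) ≤ (A * (t^n)^2 + A⁻¹ * (t^(n+1))^2)/2 := hamgm _ _
        have h3 : ‖∑ v ∈ V', χ (dotF η v)‖ * (t^n * t^(n+1))
            ≤ A * ((A * (t^n)^2 + A⁻¹ * (t^(n+1))^2)/2) := by
          refine mul_le_mul (hSVne η hη0) h2 (by positivity) hApos.le
        refine le_trans h3 (le_of_eq ?_)
        rw [← pow_mul, ← pow_mul]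
        have hAA : A * A⁻¹ = 1 := mul_inv_cancel₀ hApos.ne'
        field_simp
        ring
      refine le_trans (Finset.sum_le_sum hbnd) ?_
      refine le_trans (Finset.sum_le_sum_of_subset_of_nonneg
        (Finset.subset_univ _) (fun η _ _ => by positivity)) ?_
      rw [Finset.sum_add_distrib, ← Finset.mul_sum, ← Finset.mul_sum,
        ← energyR n, ← energyR (n+1)]
    exact add_le_add herase hzero
  -- cardinality facts
  have hVc : (V'.card : ℝ) ≤ c2 * (q:ℝ)^(d-1) := by
    have h1 : (Nat.card ↥V : ℝ) = (V'.card : ℝ) := by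
      rw [Nat.card_coe_set_eq, Set.ncard_eq_toFinset_card V V.toFinite]
    rw [← h1]
    exact hV.2.1
  have hEc : (Nat.card ↥E : ℝ) = (E'.card : ℝ) := by
    rw [Nat.card_coe_set_eq, Set.ncard_eq_toFinset_card E E.toFinite]
  have hA2 : A^2 = c3^2 * (q:ℝ)^(d-1) := by
    have h1 : ((q:ℝ) ^ (((d:ℝ)-1)/2))^2 = (q:ℝ)^((d:ℝ)-1) := by
      rw [← Real.rpow_natCast ((q:ℝ) ^ (((d:ℝ)-1)/2)) 2, ← Real.rpow_mul hQ.le]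
      norm_num
    have h2 : (q:ℝ)^((d:ℝ)-1) = (q:ℝ)^(d-1) := by
      rw [← Real.rpow_natCast (q:ℝ) (d-1)]
      congr 1
      rw [Nat.cast_sub hd1]
      norm_num
    rw [hA, mul_pow, h1, h2]
  have hqd : (q:ℝ)^d = (q:ℝ)^(d-1) * q := by
    conv_lhs => rw [hdd]
    rw [pow_succ]
  -- conclusion
  have hfin : ((q:ℝ))^d * (energy (n+1) E : ℝ)
      ≤ ((q:ℝ))^d * ((2*c2 + c3^2) * ((q:ℝ)^(d-1) * (energy n E : ℝ)
        + (Nat.card ↥E : ℝ)^(2*n+1) / (q:ℝ))) := by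
    have hcomb : ((q:ℝ))^d * (energy (n+1) E : ℝ)
        ≤ 2 * ((V'.card : ℝ) * (E'.card : ℝ)^(2*n+1)) + A^2 * (((q:ℝ))^d * (energy n E : ℝ)) := by
      have := le_trans step1 (le_trans step2 step3)
      linarith
    have hr : ((q:ℝ))^d * ((2*c2 + c3^2) * ((q:ℝ)^(d-1) * (energy n E : ℝ)
        + (Nat.card ↥E : ℝ)^(2*n+1) / (q:ℝ)))
        = (2*c2 + c3^2) * ((q:ℝ)^(d-1) * (((q:ℝ))^d * (energy n E : ℝ))
          + (q:ℝ)^(d-1) * (E'.card : ℝ)^(2*n+1)) := by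
      rw [hEc, hqd]
      have hqi : (q:ℝ) * (q:ℝ)⁻¹ = 1 := mul_inv_cancel₀ hQne
      rw [div_eq_mul_inv]
      linear_combination (2*c2 + c3^2) * (q:ℝ)^(d-1) * (E'.card : ℝ)^(2*n+1) * hqi
    rw [hr]
    have hEp : (0:ℝ) ≤ (E'.card : ℝ)^(2*n+1) := pow_nonneg (Nat.cast_nonneg _) _
    have hqd1 : (0:ℝ) ≤ (q:ℝ)^(d-1) := by positivity
    have hqdE : (0:ℝ) ≤ ((q:ℝ))^d * (energy n E : ℝ) := by positivity
    nlinarith [mul_le_mul_of_nonneg_right hVc hEp, hA2,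
      mul_le_mul_of_nonneg_right (le_of_eq hA2) hqdE,
      mul_nonneg hqd1 hEp, mul_nonneg hqd1 hqdE, sq_nonneg c3, hc2.le, hc3.le]
  exact le_of_mul_le_mul_left hfin (pow_pos hQ d)
end

section
/- For every integer d ≥ 2, every even integer k ≥ 6, and all constants c_1, c_2, c_3 > 0, there exists a constant C > 0 such that for every power q of an odd prime, every (c_1,c_2,c_3)-regular set V ⊆ F_q^d, and every E ⊆ V, one has Λ_k(E) ≤ C ( q^{(d−1)(k−4)/2} Λ_4(E) + q^{−1} Σ_{j=0}^{(k−6)/2} q^{(d−1)j} |E|^{k−1−2j} ). -/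
open Finset

set_option linter.unusedSectionVars false
set_option maxHeartbeats 1000000

namespace Stmt12
open scoped Classical
variable {F : Type} [Field F] [Fintype F] [DecidableEq F] {d : ℕ}

def dot (ξ x : Fin d → F) : F := ∑ i, ξ i * x i

lemma addchar_map_sum {ι : Type*} (χ : AddChar F ℂ) (s : Finset ι) (f : ι → F) :
    χ (∑ i ∈ s, f i) = ∏ i ∈ s, χ (f i) := by
  induction s using Finset.cons_induction with
  | empty => simp
  | cons a s ha ih => rw [Finset.sum_cons, Finset.prod_cons, AddChar.map_add_eq_mul, ih]

lemma conj_char (χ : AddChar F ℂ) (t : F) : (starRingEnd ℂ) (χ t) = χ (-t) := by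
  have h : 0 < ringChar F := Nat.pos_of_ne_zero (CharP.ringChar_ne_zero_of_finite F)
  rw [AddChar.starComp_apply h, AddChar.inv_apply]

lemma char_dot_sum (χ : AddChar F ℂ) (hχ : χ ≠ 1) (w : Fin d → F) :
    ∑ ξ : Fin d → F, χ (dot ξ w) = if w = 0 then ((Fintype.card F : ℂ)) ^ d else 0 := by
  have h1 : ∀ ξ : Fin d → F, χ (dot ξ w) = ∏ i, χ (ξ i * w i) := fun ξ =>
    addchar_map_sum χ _ _
  simp_rw [h1]
  rw [← Fintype.prod_sum (fun i (t : F) => χ (t * w i))]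
  have h2 : ∀ i, (∑ t : F, χ (t * w i)) = if w i = 0 then (Fintype.card F : ℂ) else 0 := by
    intro i
    split_ifs with h
    · simp [h]
    · calc ∑ t : F, χ (t * w i) = ∑ s : F, χ s :=
            Fintype.sum_equiv (Equiv.mulRight₀ (w i) h) _ _ (fun t => rfl)
        _ = 0 := AddChar.sum_eq_zero_of_ne_one hχ
  simp_rw [h2]
  by_cases hw : w = 0
  · simp [hw]
  · rw [if_neg hw]
    obtain ⟨i, hi⟩ := Function.ne_iff.1 hw
    exact Finset.prod_eq_zero (Finset.mem_univ i) (if_neg hi)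

/-- the count -/
def cntC {ι : Type} [Fintype ι] [DecidableEq ι] (C : ι → Finset (Fin d → F)) (ε : ι → F) : ℕ :=
  ((Fintype.piFinset C).filter (fun p => ∑ i, ε i • p i = 0)).card

lemma cntC_mono {ι : Type} [Fintype ι] [DecidableEq ι] {C C' : ι → Finset (Fin d → F)}
    (h : ∀ i, C i ⊆ C' i) (ε : ι → F) : cntC C ε ≤ cntC C' ε :=
  Finset.card_le_card (Finset.filter_subset_filter _ (Fintype.piFinset_subset _ _ h))

lemma L1 {ι : Type} [Fintype ι] [DecidableEq ι] (χ : AddChar F ℂ) (hχ : χ ≠ 1)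
    (C : ι → Finset (Fin d → F)) (ε : ι → F) :
    ∑ ξ : Fin d → F, ∏ i, (∑ a ∈ C i, χ (ε i * dot ξ a))
      = (Fintype.card F : ℂ) ^ d * (cntC C ε : ℕ) := by
  have h1 : ∀ ξ : Fin d → F, ∏ i, (∑ a ∈ C i, χ (ε i * dot ξ a))
      = ∑ p ∈ Fintype.piFinset C, χ (dot ξ (∑ i, ε i • p i)) := by
    intro ξ
    rw [Finset.prod_univ_sum]
    refine Finset.sum_congr rfl fun p hp => ?_
    have hdot : dot ξ (∑ i, ε i • p i) = ∑ i, ε i * dot ξ (p i) := by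
      simp only [dot, Finset.sum_apply, Pi.smul_apply, smul_eq_mul, Finset.mul_sum]
      rw [Finset.sum_comm]
      exact Finset.sum_congr rfl fun i _ => Finset.sum_congr rfl fun j _ => by ring
    rw [hdot, addchar_map_sum]
  simp_rw [h1]
  rw [Finset.sum_comm]
  have h2 : ∀ p : (_ : ι) → (Fin d → F), ∑ ξ : Fin d → F, χ (dot ξ (∑ i, ε i • p i))
      = if ∑ i, ε i • p i = 0 then ((Fintype.card F : ℂ)) ^ d else 0 :=
    fun p => char_dot_sum χ hχ _
  simp_rw [h2]
  rw [← Finset.sum_filter, Finset.sum_const, cntC, nsmul_eq_mul, mul_comm]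

lemma elim_smul_sum {m m' : ℕ} (p : Fin m ⊕ Fin m' → (Fin d → F)) :
    (∑ i, Sum.elim (fun _ => (1:F)) (fun _ => (-1:F)) i • p i = 0)
      ↔ ∑ i, p (Sum.inl i) = ∑ i, p (Sum.inr i) := by
  rw [Fintype.sum_sum_type]
  simp only [Sum.elim_inl, Sum.elim_inr, one_smul, neg_smul, Finset.sum_neg_distrib]
  rw [add_neg_eq_zero]

lemma energy_eq_cnt (E : Set (Fin d → F)) (m : ℕ) :
    energy m E = cntC (fun _ : Fin m ⊕ Fin m => Finset.univ.filter (· ∈ E))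
      (Sum.elim (fun _ => (1:F)) (fun _ => (-1:F))) := by
  classical
  rw [energy, cntC, ← Fintype.card_coe, Nat.card_eq_fintype_card]
  refine Fintype.card_congr ?_
  refine ⟨fun z => ⟨Sum.elim z.1.1 z.1.2, ?_⟩,
         fun p => ⟨(fun i => p.1 (Sum.inl i), fun i => p.1 (Sum.inr i)), ?_⟩, ?_, ?_⟩
  · obtain ⟨⟨p1, p2⟩, h1, h2, h3⟩ := z
    simp only [Finset.mem_coe, Finset.mem_filter, Fintype.mem_piFinset, elim_smul_sum]
    refine ⟨fun i => ?_, by simpa using h3⟩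
    cases i <;> simp [h1 _, h2 _]
  · obtain ⟨p, hp⟩ := p
    simp only [Finset.mem_coe, Finset.mem_filter, Fintype.mem_piFinset, elim_smul_sum,
      Finset.mem_univ, true_and] at hp
    exact ⟨fun i => hp.1 (Sum.inl i), fun i => hp.1 (Sum.inr i), hp.2⟩
  · rintro ⟨⟨p1, p2⟩, h⟩
    rfl
  · rintro ⟨p, hp⟩
    apply Subtype.ext
    funext i
    cases i <;> rfl

/-- exponential sum over a set -/
noncomputable def Sc (χ : AddChar F ℂ) (E : Set (Fin d → F)) (ξ : Fin d → F) : ℂ :=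
  ∑ a ∈ Finset.univ.filter (· ∈ E), χ (dot ξ a)

lemma conj_Sc (χ : AddChar F ℂ) (E : Set (Fin d → F)) (ξ : Fin d → F) :
    (starRingEnd ℂ) (Sc χ E ξ) = ∑ a ∈ Finset.univ.filter (· ∈ E), χ (-(dot ξ a)) := by
  rw [Sc, map_sum]
  exact Finset.sum_congr rfl fun a _ => conj_char χ _

lemma card_filter_mem (E : Set (Fin d → F)) :
    (Finset.univ.filter (· ∈ E)).card = Nat.card E := by
  rw [Nat.card_eq_fintype_card, Fintype.card_subtype]

lemma I1 (χ : AddChar F ℂ) (hχ : χ ≠ 1) (E : Set (Fin d → F)) (m : ℕ) :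
    ∑ ξ : Fin d → F, (‖Sc χ E ξ‖) ^ (2*m)
      = (Fintype.card F : ℝ) ^ d * (energy m E : ℝ) := by
  have key : ∑ ξ : Fin d → F, ((‖Sc χ E ξ‖ ^ (2*m) : ℝ) : ℂ)
      = (Fintype.card F : ℂ) ^ d * (energy m E : ℕ) := by
    rw [energy_eq_cnt E m, ← L1 (d := d) χ hχ _ _]
    refine Finset.sum_congr rfl fun ξ _ => ?_
    rw [Fintype.prod_sum_type]
    simp only [Sum.elim_inl, Sum.elim_inr, one_mul, neg_one_mul]
    rw [Finset.prod_const, Finset.prod_const, Finset.card_univ, Fintype.card_fin]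
    have e1 : (∑ a ∈ Finset.univ.filter (· ∈ E), χ (dot ξ a)) = Sc χ E ξ := rfl
    rw [e1, ← conj_Sc, ← mul_pow, Complex.mul_conj, ← Complex.ofReal_pow, pow_mul,
      Complex.sq_norm]
  rw [← Complex.ofReal_sum] at key
  have h2 : ((((Fintype.card F : ℝ)) ^ d * (energy m E : ℝ) : ℝ) : ℂ)
      = (Fintype.card F : ℂ) ^ d * (energy m E : ℕ) := by push_cast; ring
  exact Complex.ofReal_injective (key.trans h2.symm)

lemma TT_eq (χ : AddChar F ℂ) (V : Set (Fin d → F)) (ξ : Fin d → F) :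
    ∑ a ∈ Finset.univ.filter (· ∈ V), χ (-(dot ξ a)) = (Fintype.card F : ℂ) ^ d * ftF χ V ξ := by
  have hq : ((Fintype.card F : ℂ)) ^ d ≠ 0 := by
    have : Nonempty F := ⟨0⟩
    exact pow_ne_zero _ (Nat.cast_ne_zero.2 Fintype.card_ne_zero)
  rw [ftF, ← mul_assoc, mul_inv_cancel₀ hq, one_mul, Finset.sum_filter]
  refine Finset.sum_congr rfl fun x _ => ?_
  rw [Set.indicator_apply]
  split_ifs with h <;> simp [dot]

/-- The main counting identity for the `V`-augmented energy count. -/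
lemma I2 (χ : AddChar F ℂ) (hχ : χ ≠ 1) (V E : Set (Fin d → F)) (m : ℕ) :
    (Fintype.card F : ℂ) ^ d * (cntC (Sum.elim (fun _ : Fin (m+1) => Finset.univ.filter (· ∈ E))
        (fun i : Fin (m+1) => if i = Fin.last m then Finset.univ.filter (· ∈ V)
          else Finset.univ.filter (· ∈ E)))
        (Sum.elim (fun _ => (1:F)) (fun _ => (-1:F))) : ℕ)
      = ∑ ξ : Fin d → F, (Sc χ E ξ) ^ (m+1) * ((starRingEnd ℂ) (Sc χ E ξ)) ^ m *
          ((Fintype.card F : ℂ) ^ d * ftF χ V ξ) := by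
  rw [← L1 (d := d) χ hχ _ _]
  refine Finset.sum_congr rfl fun ξ _ => ?_
  rw [Fintype.prod_sum_type]
  simp only [Sum.elim_inl, Sum.elim_inr, one_mul, neg_one_mul]
  have hl : (∏ _i : Fin (m+1), ∑ a ∈ Finset.univ.filter (· ∈ E), χ (dot ξ a))
      = (Sc χ E ξ) ^ (m+1) := by
    rw [Finset.prod_const, Finset.card_univ, Fintype.card_fin]; rfl
  rw [hl, mul_assoc]
  congr 1
  rw [Fin.prod_univ_castSucc]
  congr 1
  · have : ∀ i : Fin m, (if Fin.castSucc i = Fin.last m then Finset.univ.filter (· ∈ V)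
        else Finset.univ.filter (· ∈ E)) = Finset.univ.filter (· ∈ E) := fun i =>
      if_neg (Fin.castSucc_lt_last i).ne
    simp only [this]
    rw [Finset.prod_const, Finset.card_univ, Fintype.card_fin, conj_Sc]
  · rw [if_pos rfl, TT_eq]

lemma numeric {a b κ e X : ℝ} (hb : 0 ≤ b) (hκ : 0 ≤ κ) (he : 0 ≤ e) (hX : 0 ≤ X)
    (h1 : a ≤ b + κ * X) (h2 : X^2 ≤ a * e) : a ≤ 2*b + 4*κ^2*e := by
  rcases le_or_gt a (2*b) with h | h
  · nlinarith [mul_nonneg (mul_nonneg (by norm_num : (0:ℝ) ≤ 4) (sq_nonneg κ)) he]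
  · have ha0 : 0 < a := by nlinarith
    have h3 : a ≤ 2*(κ*X) := by nlinarith
    nlinarith [sq_nonneg (a - 2*κ*X)]

lemma KL (χ : AddChar F ℂ) (hχ : χ ≠ 1) (V E : Set (Fin d → F)) (hEV : E ⊆ V)
    {c2 c3 : ℝ} (hc2 : 0 ≤ c2) (hc3 : 0 ≤ c3) (hd : 1 ≤ d)
    (hV2 : (Nat.card V : ℝ) ≤ c2 * (Fintype.card F : ℝ) ^ (d-1))
    (hV3 : ∀ w : Fin d → F, w ≠ 0 →
      ‖ftF χ V w‖ ≤ c3 * (Fintype.card F : ℝ) ^ (-(((d:ℝ)+1)/2))) (m : ℕ) :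
    (energy (m+1) E : ℝ) ≤ 2*c2*(Nat.card E : ℝ)^(2*m+1)/(Fintype.card F : ℝ)
      + 4*c3^2*(Fintype.card F : ℝ)^(d-1)*(energy m E : ℝ) := by
  classical
  have hne : Nonempty F := ⟨0⟩
  set qR : ℝ := (Fintype.card F : ℝ) with hqR
  have hq0 : (0:ℝ) < qR := by rw [hqR]; exact_mod_cast Fintype.card_pos
  have hqd0 : (0:ℝ) < qR ^ d := pow_pos hq0 d
  -- the V-augmented count
  set Cv : (Fin (m+1) ⊕ Fin (m+1)) → Finset (Fin d → F) :=
    Sum.elim (fun _ => Finset.univ.filter (· ∈ E))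
      (fun i => if i = Fin.last m then Finset.univ.filter (· ∈ V)
        else Finset.univ.filter (· ∈ E)) with hCv
  set εv : (Fin (m+1) ⊕ Fin (m+1)) → F := Sum.elim (fun _ => (1:F)) (fun _ => (-1:F)) with hεv
  set NV : ℕ := cntC Cv εv with hNV
  -- step 1 : energy (m+1) E ≤ NV
  have step1 : energy (m+1) E ≤ NV := by
    rw [energy_eq_cnt E (m+1), hNV]
    refine cntC_mono (fun i => ?_) εv
    rcases i with i | i
    · simp [hCv]
    · simp only [hCv, Sum.elim_inr]
      split_ifs with h
      · intro x hx
        simp only [Finset.mem_filter, Finset.mem_univ, true_and] at hx ⊢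
        exact hEV hx
      · exact fun x hx => hx
  -- abbreviations
  set S : (Fin d → F) → ℂ := Sc χ E with hS
  set G : (Fin d → F) → ℂ :=
    fun ξ => (S ξ) ^ (m+1) * ((starRingEnd ℂ) (S ξ)) ^ m *
      ((Fintype.card F : ℂ) ^ d * ftF χ V ξ) with hG
  have step2 : (Fintype.card F : ℂ) ^ d * (NV : ℕ) = ∑ ξ : Fin d → F, G ξ := I2 χ hχ V E m
  -- the quantities
  set X : ℝ := ∑ ξ ∈ Finset.univ.erase (0 : Fin d → F), (‖S ξ‖) ^ (2*m+1) with hX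
  set κ : ℝ := c3 * qR ^ d * qR ^ (-(((d:ℝ)+1)/2)) with hκ
  set b : ℝ := (Nat.card E : ℝ) ^ (2*m+1) * (c2 * qR ^ (d-1)) with hb
  have hX0 : 0 ≤ X := Finset.sum_nonneg fun ξ _ => pow_nonneg (norm_nonneg _) _
  have hκ0 : 0 ≤ κ := by
    apply mul_nonneg (mul_nonneg hc3 (le_of_lt hqd0))
    exact Real.rpow_nonneg (le_of_lt hq0) _
  have hb0 : 0 ≤ b := by positivity
  -- step 4 : the triangle-inequality bound
  have habsG : ∀ ξ : Fin d → F, ‖G ξ‖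
      = (‖S ξ‖) ^ (2*m+1) * ‖(Fintype.card F : ℂ) ^ d * ftF χ V ξ‖ := by
    intro ξ
    rw [hG]
    simp only [norm_mul, norm_pow, Complex.norm_conj]
    rw [← pow_add]
    congr 2
    omega
  have hS0 : ‖S 0‖ = (Nat.card E : ℝ) := by
    have : S 0 = ((Nat.card E : ℕ) : ℂ) := by
      rw [hS, Sc, ← card_filter_mem E]
      have : ∀ a ∈ Finset.univ.filter (· ∈ E), χ (dot (0 : Fin d → F) a) = 1 := by
        intro a _
        have : dot (0 : Fin d → F) a = 0 := by simp [dot]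
        rw [this, AddChar.map_zero_eq_one]
      rw [Finset.sum_congr rfl this, Finset.sum_const, nsmul_eq_mul, mul_one]
    rw [this, Complex.norm_natCast]
  have hT0 : ‖(Fintype.card F : ℂ) ^ d * ftF χ V 0‖ ≤ c2 * qR ^ (d-1) := by
    have h1 : ((Fintype.card F : ℂ) ^ d * ftF χ V 0)
        = ∑ a ∈ Finset.univ.filter (· ∈ V), χ (-(dot (0 : Fin d → F) a)) :=
      (TT_eq χ V 0).symm
    rw [h1]
    have : ∀ a ∈ Finset.univ.filter (· ∈ V), χ (-(dot (0 : Fin d → F) a)) = 1 := by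
      intro a _
      have hz : dot (0 : Fin d → F) a = 0 := by simp [dot]
      rw [hz, neg_zero, AddChar.map_zero_eq_one]
    rw [Finset.sum_congr rfl this, Finset.sum_const, nsmul_eq_mul, mul_one,
      Complex.norm_natCast, card_filter_mem V]
    exact hV2
  have hTξ : ∀ ξ : Fin d → F, ξ ≠ 0 →
      ‖(Fintype.card F : ℂ) ^ d * ftF χ V ξ‖ ≤ κ := by
    intro ξ hξ
    calc ‖(Fintype.card F : ℂ) ^ d * ftF χ V ξ‖
        = qR ^ d * ‖ftF χ V ξ‖ := by
          rw [norm_mul, norm_pow, Complex.norm_natCast, hqR]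
      _ ≤ qR ^ d * (c3 * qR ^ (-(((d:ℝ)+1)/2))) :=
          mul_le_mul_of_nonneg_left (hV3 ξ hξ) (le_of_lt hqd0)
      _ = κ := by rw [hκ]; ring
  have step4 : qR ^ d * (NV : ℝ) ≤ b + κ * X := by
    have h1 : qR ^ d * (NV : ℝ) = ‖(Fintype.card F : ℂ) ^ d * (NV : ℕ)‖ := by
      rw [norm_mul, norm_pow, Complex.norm_natCast, Complex.norm_natCast]
    rw [h1, step2]
    calc ‖∑ ξ : Fin d → F, G ξ‖ ≤ ∑ ξ : Fin d → F, ‖G ξ‖ := by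
          simpa using norm_sum_le Finset.univ G
      _ = ‖G 0‖ + ∑ ξ ∈ Finset.univ.erase (0 : Fin d → F), ‖G ξ‖ :=
          (Finset.add_sum_erase _ _ (Finset.mem_univ 0)).symm
      _ ≤ b + κ * X := by
          refine add_le_add ?_ ?_
          · rw [habsG 0, hS0, hb]
            exact mul_le_mul_of_nonneg_left hT0 (by positivity)
          · rw [hX, Finset.mul_sum]
            refine Finset.sum_le_sum fun ξ hξ => ?_
            rw [habsG ξ, mul_comm]
            exact mul_le_mul_of_nonneg_right (hTξ ξ (Finset.ne_of_mem_erase hξ))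
              (pow_nonneg (norm_nonneg _) _)
  -- step 7 : Cauchy-Schwarz
  have step7 : X^2 ≤ (qR ^ d * (energy (m+1) E : ℝ)) * (qR ^ d * (energy m E : ℝ)) := by
    have hXsplit : X = ∑ ξ ∈ Finset.univ.erase (0 : Fin d → F),
        (‖S ξ‖) ^ (m+1) * (‖S ξ‖) ^ m := by
      rw [hX]
      refine Finset.sum_congr rfl fun ξ _ => ?_
      rw [← pow_add]
      congr 1
      omega
    rw [hXsplit]
    calc (∑ ξ ∈ Finset.univ.erase (0 : Fin d → F),
          (‖S ξ‖) ^ (m+1) * (‖S ξ‖) ^ m)^2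
        ≤ (∑ ξ ∈ Finset.univ.erase (0 : Fin d → F), ((‖S ξ‖) ^ (m+1))^2) *
          (∑ ξ ∈ Finset.univ.erase (0 : Fin d → F), ((‖S ξ‖) ^ m)^2) :=
          Finset.sum_mul_sq_le_sq_mul_sq _ _ _
      _ ≤ (∑ ξ : Fin d → F, ((‖S ξ‖) ^ (m+1))^2) *
          (∑ ξ : Fin d → F, ((‖S ξ‖) ^ m)^2) := by
          refine mul_le_mul ?_ ?_ ?_ ?_
          · exact Finset.sum_le_sum_of_subset_of_nonneg (Finset.erase_subset _ _)
              (fun ξ _ _ => sq_nonneg _)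
          · exact Finset.sum_le_sum_of_subset_of_nonneg (Finset.erase_subset _ _)
              (fun ξ _ _ => sq_nonneg _)
          · exact Finset.sum_nonneg fun ξ _ => sq_nonneg _
          · exact Finset.sum_nonneg fun ξ _ => sq_nonneg _
      _ = (qR ^ d * (energy (m+1) E : ℝ)) * (qR ^ d * (energy m E : ℝ)) := by
          have e1 : ∑ ξ : Fin d → F, ((‖S ξ‖) ^ (m+1))^2
              = ∑ ξ : Fin d → F, (‖S ξ‖) ^ (2*(m+1)) :=
            Finset.sum_congr rfl fun ξ _ => by rw [← pow_mul]; ring_nf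
          have e2 : ∑ ξ : Fin d → F, ((‖S ξ‖) ^ m)^2
              = ∑ ξ : Fin d → F, (‖S ξ‖) ^ (2*m) :=
            Finset.sum_congr rfl fun ξ _ => by rw [← pow_mul]; ring_nf
          rw [e1, e2, hS, I1 χ hχ E (m+1), I1 χ hχ E m, hqR]
  -- assemble
  have hEm1 : qR ^ d * (energy (m+1) E : ℝ) ≤ qR ^ d * (NV : ℝ) :=
    mul_le_mul_of_nonneg_left (by exact_mod_cast step1) (le_of_lt hqd0)
  have key : qR ^ d * (NV : ℝ) ≤ 2*b + 4*κ^2*(qR ^ d * (energy m E : ℝ)) := by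
    refine numeric hb0 hκ0 (by positivity) hX0 step4 ?_
    calc X^2 ≤ (qR ^ d * (energy (m+1) E : ℝ)) * (qR ^ d * (energy m E : ℝ)) := step7
      _ ≤ (qR ^ d * (NV : ℝ)) * (qR ^ d * (energy m E : ℝ)) := by
          apply mul_le_mul_of_nonneg_right hEm1 (by positivity)
  have hκ2 : κ^2 = c3^2 * qR ^ (d-1) := by
    rw [hκ]
    have h1 : (qR ^ (-(((d:ℝ)+1)/2)))^2 = qR ^ (-((d:ℝ)+1)) := by
      rw [← Real.rpow_natCast (qR ^ (-(((d:ℝ)+1)/2))) 2, ← Real.rpow_mul (le_of_lt hq0)]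
      norm_num
    have h2 : (qR ^ d)^2 * qR ^ (-((d:ℝ)+1)) = qR ^ (d-1) := by
      rw [← pow_mul, ← Real.rpow_natCast qR (d*2), ← Real.rpow_natCast qR (d-1),
        ← Real.rpow_add hq0]
      congr 1
      push_cast [Nat.cast_sub hd]
      ring
    calc (c3 * qR ^ d * qR ^ (-(((d:ℝ)+1)/2)))^2
        = c3^2 * ((qR ^ d)^2 * (qR ^ (-(((d:ℝ)+1)/2)))^2) := by ring
      _ = c3^2 * qR ^ (d-1) := by rw [h1, h2]
  -- final division
  have final : qR ^ d * (energy (m+1) E : ℝ)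
      ≤ 2*b + 4*(c3^2 * qR ^ (d-1))*(qR ^ d * (energy m E : ℝ)) := by
    rw [← hκ2]
    exact hEm1.trans key
  have hqd : qR ^ d = qR ^ (d-1) * qR := by
    rw [← pow_succ, Nat.sub_add_cancel hd]
  have h2b : 2*b + 4*(c3^2 * qR ^ (d-1))*(qR ^ d * (energy m E : ℝ))
      = qR ^ d * (2*c2*(Nat.card E : ℝ)^(2*m+1)/qR
        + 4*c3^2*qR^(d-1)*(energy m E : ℝ)) := by
    rw [hb]
    rw [hqd]
    field_simp
  rw [h2b] at final
  exact le_of_mul_le_mul_left final hqd0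

lemma step_alg {c2 c3 q u w s p β : ℝ} (hc2 : 0 ≤ c2) (hc3 : 0 ≤ c3) (hq : 0 < q)
    (hu : 0 ≤ u) (hw : 0 ≤ w) (hs : 0 ≤ s) (hp : 0 ≤ p) (hβ : 1 ≤ β) :
    2*c2*p/q + 4*c3^2*u*(β*(w + s/q)) ≤ (2*c2+4*c3^2+1)*β*(u*w + (u*s + p)/q) := by
  have hq' : (0:ℝ) < q⁻¹ := by positivity
  rw [div_eq_mul_inv, div_eq_mul_inv, div_eq_mul_inv]
  have hβ0 : (0:ℝ) ≤ β := by linarith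
  have A1 : 4*c3^2*(u*(β*w)) ≤ (2*c2+4*c3^2+1)*β*(u*w) := by
    nlinarith [mul_nonneg (mul_nonneg hβ0 hu) hw]
  have A2 : 4*c3^2*(u*(β*(s*q⁻¹))) ≤ (2*c2+4*c3^2+1)*β*(u*(s*q⁻¹)) := by
    nlinarith [mul_nonneg (mul_nonneg hβ0 hu) (mul_nonneg hs hq'.le)]
  have hCβ : 2*c2 ≤ (2*c2+4*c3^2+1)*β := by
    nlinarith [mul_nonneg (by positivity : (0:ℝ) ≤ 2*c2+4*c3^2+1) (by linarith : (0:ℝ) ≤ β - 1)]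
  have A3 : 2*c2*(p*q⁻¹) ≤ (2*c2+4*c3^2+1)*β*(p*q⁻¹) :=
    mul_le_mul_of_nonneg_right hCβ (mul_nonneg hp hq'.le)
  nlinarith [A1, A2, A3]

lemma main_ind (χ : AddChar F ℂ) (hχ : χ ≠ 1) (V E : Set (Fin d → F)) (hEV : E ⊆ V)
    {c2 c3 : ℝ} (hc2 : 0 ≤ c2) (hc3 : 0 ≤ c3) (hd : 1 ≤ d)
    (hV2 : (Nat.card V : ℝ) ≤ c2 * (Fintype.card F : ℝ) ^ (d-1))
    (hV3 : ∀ w : Fin d → F, w ≠ 0 →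
      ‖ftF χ V w‖ ≤ c3 * (Fintype.card F : ℝ) ^ (-(((d:ℝ)+1)/2))) :
    ∀ n : ℕ, (energy (n+2) E : ℝ) ≤ (2*c2 + 4*c3^2 + 1)^n *
      ((Fintype.card F : ℝ) ^ ((d-1)*n) * (energy 2 E : ℝ) +
        (∑ j ∈ Finset.range n, (Fintype.card F : ℝ) ^ ((d-1)*j) *
          (Nat.card E : ℝ) ^ (2*n+3-2*j)) / (Fintype.card F : ℝ)) := by
  have hne : Nonempty F := ⟨0⟩
  have hq0 : (0:ℝ) < (Fintype.card F : ℝ) := by exact_mod_cast Fintype.card_pos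
  set qR : ℝ := (Fintype.card F : ℝ) with hqRdef
  set B0 : ℝ := 2*c2 + 4*c3^2 + 1 with hB0
  have hB1 : (1:ℝ) ≤ B0 := by nlinarith [sq_nonneg c3]
  have hB0pos : (0:ℝ) < B0 := by linarith
  intro n
  induction n with
  | zero => simp
  | succ n ih =>
    have hkl := KL χ hχ V E hEV hc2 hc3 hd hV2 hV3 (n+2)
    have h1 : (energy (n+1+2) E : ℝ) ≤ 2*c2*(Nat.card E : ℝ)^(2*n+5)/qR
        + 4*c3^2*qR^(d-1)*(energy (n+2) E : ℝ) := by
      have e1 : n+2+1 = n+1+2 := by ring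
      rw [e1] at hkl
      have e2 : 2*(n+2)+1 = 2*n+5 := by ring
      rw [e2] at hkl
      exact hkl
    have h2 : 4*c3^2*qR^(d-1)*(energy (n+2) E : ℝ) ≤ 4*c3^2*qR^(d-1)*(B0^n *
        (qR ^ ((d-1)*n) * (energy 2 E : ℝ) +
          (∑ j ∈ Finset.range n, qR ^ ((d-1)*j) * (Nat.card E : ℝ) ^ (2*n+3-2*j)) / qR)) := by
      apply mul_le_mul_of_nonneg_left ih
      positivity
    have hsum : ∑ j ∈ Finset.range (n+1), qR ^ ((d-1)*j) * (Nat.card E : ℝ) ^ (2*(n+1)+3-2*j)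
        = qR^(d-1) * (∑ j ∈ Finset.range n, qR ^ ((d-1)*j) * (Nat.card E : ℝ) ^ (2*n+3-2*j))
          + (Nat.card E : ℝ) ^ (2*n+5) := by
      rw [Finset.sum_range_succ', Finset.mul_sum]
      congr 1
      · refine Finset.sum_congr rfl fun j hj => ?_
        have e1 : (d-1)*(j+1) = (d-1) + (d-1)*j := by ring
        have e2 : 2*(n+1)+3-2*(j+1) = 2*n+3-2*j := by omega
        rw [e1, e2, pow_add]
        ring
      · have e3 : 2*(n+1)+3-2*0 = 2*n+5 := by omega
        rw [e3, Nat.mul_zero, pow_zero, one_mul]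
    have hqpow : qR ^ ((d-1)*(n+1)) * (energy 2 E : ℝ)
        = qR^(d-1) * (qR ^ ((d-1)*n) * (energy 2 E : ℝ)) := by
      rw [show (d-1)*(n+1) = (d-1)+(d-1)*n from by ring, pow_add, mul_assoc]
    have hpow1 : B0^(n+1) = (2*c2+4*c3^2+1) * B0^n := by
      rw [hB0, pow_succ]
      ring
    calc (energy (n+1+2) E : ℝ)
        ≤ 2*c2*(Nat.card E : ℝ)^(2*n+5)/qR
          + 4*c3^2*qR^(d-1)*(B0^n * (qR ^ ((d-1)*n) * (energy 2 E : ℝ) +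
            (∑ j ∈ Finset.range n, qR ^ ((d-1)*j) * (Nat.card E : ℝ) ^ (2*n+3-2*j)) / qR)) :=
          le_trans h1 (by linarith)
      _ ≤ B0^(n+1) * (qR ^ ((d-1)*(n+1)) * (energy 2 E : ℝ) +
            (∑ j ∈ Finset.range (n+1), qR ^ ((d-1)*j) *
              (Nat.card E : ℝ) ^ (2*(n+1)+3-2*j)) / qR) := by
          rw [hsum, hqpow, hpow1]
          exact step_alg hc2 hc3 hq0 (by positivity) (by positivity)
            (by positivity) (by positivity) (one_le_pow₀ hB1)

end Stmt12

open Stmt12 in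
/-- for `d ≥ 2`, even `k ≥ 6` and `c₁, c₂, c₃ > 0` there is `C > 0` such that
for every odd prime power `q`, every `(c₁,c₂,c₃)`-regular `V ⊆ 𝔽_q^d` and every `E ⊆ V`,
`Λ_k(E) ≤ C (q^{(d-1)(k-4)/2} Λ_4(E) + q^{-1} Σ_{j=0}^{(k-6)/2} q^{(d-1)j} |E|^{k-1-2j})`. -/
theorem stmt_12 (d k : ℕ) (hd : 2 ≤ d) (hk : 6 ≤ k) (hke : Even k)
    (c1 c2 c3 : ℝ) (hc1 : 0 < c1) (hc2 : 0 < c2) (hc3 : 0 < c3) :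
    ∃ C : ℝ, 0 < C ∧
      ∀ (F : Type) [Field F] [Fintype F], Odd (Fintype.card F) →
        ∀ χ : AddChar F ℂ, χ ≠ 1 →
          ∀ V : Set (Fin d → F), IsRegularVariety c1 c2 c3 χ V →
            ∀ E : Set (Fin d → F), E ⊆ V →
              (energy (k / 2) E : ℝ) ≤
                C * ((Fintype.card F : ℝ) ^ ((d - 1) * (k - 4) / 2) * (energy 2 E : ℝ) +
                  (∑ j ∈ Finset.range ((k - 6) / 2 + 1),
                    (Fintype.card F : ℝ) ^ ((d - 1) * j) *
                      (Nat.card E : ℝ) ^ (k - 1 - 2 * j)) / (Fintype.card F : ℝ)) := by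
  have hB0 : (0:ℝ) < 2*c2 + 4*c3^2 + 1 := by nlinarith [sq_nonneg c3]
  refine ⟨(2*c2 + 4*c3^2 + 1) ^ (k/2 - 2), pow_pos hB0 _, ?_⟩
  intro F _ _ hodd χ hχ V hreg E hEV
  letI : DecidableEq F := Classical.decEq F
  obtain ⟨h1, h2, h3⟩ := hreg
  have hd1 : 1 ≤ d := by omega
  have hmain := main_ind χ hχ V E hEV hc2.le hc3.le hd1 h2 h3 (k/2 - 2)
  have e1 : k/2 - 2 + 2 = k/2 := by omega
  rw [e1] at hmain
  obtain ⟨t, rfl⟩ := hke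
  have e2 : (d - 1) * (t + t - 4) / 2 = (d-1) * ((t+t)/2 - 2) := by
    have h4 : t + t - 4 = 2*(t-2) := by omega
    have h5 : (t+t)/2 = t := by omega
    rw [h4, h5, show (d-1)*(2*(t-2)) = 2*((d-1)*(t-2)) from by ring,
      Nat.mul_div_cancel_left _ (by norm_num : 0 < 2)]
  have e3 : (t + t - 6) / 2 + 1 = (t+t)/2 - 2 := by omega
  have e4 : ∀ j : ℕ, t + t - 1 - 2*j = 2*((t+t)/2 - 2) + 3 - 2*j := fun j => by omega
  rw [e2, e3]
  simp only [e4]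
  exact hmain
end

section
/- For every integer d ≥ 2, every even integer k ≥ 2, and all constants c_1, c_2, c_3 > 0, there exists a constant C > 0 such that for every power q of an odd prime, every (c_1,c_2,c_3)-regular set V ⊆ F_q^d, and every E ⊆ V with |E| > q^{(d−1)/2}, one has Λ_k(E) ≤ C ( q^{(d−1)(k−2)/2} |E| + q^{−1} |E|^{k−1} ). -/
open Finset

set_option maxHeartbeats 1000000

set_option maxHeartbeats 1000000

private lemma addChar_prod_of_sum {F : Type} [Field F] (χ : AddChar F ℂ) {ι' : Type*}
    (s : Finset ι') (f : ι' → F) : χ (∑ i ∈ s, f i) = ∏ i ∈ s, χ (f i) := by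
  classical
  induction s using Finset.cons_induction with
  | empty => simp
  | cons a s ha ih => rw [Finset.sum_cons, Finset.prod_cons,
      AddChar.map_add_eq_mul, ih]

private lemma orth_one {F : Type} [Field F] [Fintype F] [DecidableEq F] (χ : AddChar F ℂ)
    (hχ : χ ≠ 1) (a : F) : ∑ t : F, χ (t * a) = if a = 0 then (Fintype.card F : ℂ) else 0 := by
  rcases eq_or_ne a 0 with rfl | ha
  · simp
  · rw [if_neg ha]
    have h := AddChar.sum_eq_zero_of_ne_one ((AddChar.IsPrimitive.of_ne_one hχ) ha)
    simpa [AddChar.mulShift_apply, mul_comm] using h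

private lemma orth_pi {F : Type} [Field F] [Fintype F] [DecidableEq F] (χ : AddChar F ℂ)
    (hχ : χ ≠ 1) {d : ℕ} (a : Fin d → F) :
    ∑ ξ : Fin d → F, χ (∑ i, ξ i * a i) = if a = 0 then ((Fintype.card F : ℂ) ^ d) else 0 := by
  classical
  calc ∑ ξ : Fin d → F, χ (∑ i, ξ i * a i)
      = ∑ ξ ∈ Fintype.piFinset (fun _ : Fin d => (univ : Finset F)),
          ∏ i, χ (ξ i * a i) := by
        rw [Fintype.piFinset_univ]
        exact Finset.sum_congr rfl fun ξ _ => addChar_prod_of_sum χ _ _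
    _ = ∏ i, ∑ t : F, χ (t * a i) :=
        (Finset.prod_univ_sum (fun _ : Fin d => (univ : Finset F))
          (fun i t => χ (t * a i))).symm
    _ = ∏ i : Fin d, (if a i = 0 then (Fintype.card F : ℂ) else 0) :=
        Finset.prod_congr rfl fun i _ => orth_one χ hχ (a i)
    _ = if a = 0 then ((Fintype.card F : ℂ) ^ d) else 0 := by
      by_cases h : a = 0
      · subst h; simp
      · rw [if_neg h]
        obtain ⟨i, hi⟩ : ∃ i, a i ≠ 0 := by
          by_contra hc; push_neg at hc; exact h (funext hc)
        exact Finset.prod_eq_zero (mem_univ i) (by rw [if_neg hi])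

private lemma expand_prod {F : Type} [Field F] [Fintype F] [DecidableEq F] (ψ : AddChar F ℂ)
    {d J : ℕ} (G : Fin J → Finset (Fin d → F)) (ξ : Fin d → F) :
    ∏ i, ∑ x ∈ G i, ψ (∑ j, ξ j * x j)
      = ∑ y ∈ Fintype.piFinset G, ψ (∑ j, ξ j * (∑ i, y i) j) := by
  rw [Finset.prod_univ_sum]
  refine Finset.sum_congr rfl fun y _ => ?_
  rw [← addChar_prod_of_sum]
  congr 1
  rw [Finset.sum_comm]
  refine Finset.sum_congr rfl fun j _ => ?_
  rw [Finset.sum_apply, Finset.mul_sum]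

private lemma master {F : Type} [Field F] [Fintype F] [DecidableEq F] (χ : AddChar F ℂ)
    (hχ : χ ≠ 1) {d : ℕ} {J : ℕ} (G H : Fin J → Finset (Fin d → F)) :
    ∑ ξ : Fin d → F, ((∏ i, ∑ x ∈ G i, χ (∑ j, ξ j * x j)) *
        ∏ i, ∑ y ∈ H i, χ (-∑ j, ξ j * y j))
      = (Fintype.card F : ℂ) ^ d *
        (((Fintype.piFinset G ×ˢ Fintype.piFinset H).filter
          (fun p => ∑ i, p.1 i = ∑ i, p.2 i)).card : ℂ) := by
  have hexp : ∀ ξ : Fin d → F,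
      (∏ i, ∑ x ∈ G i, χ (∑ j, ξ j * x j)) * ∏ i, ∑ y ∈ H i, χ (-∑ j, ξ j * y j)
        = ∑ p ∈ Fintype.piFinset G ×ˢ Fintype.piFinset H,
            χ (∑ j, ξ j * (∑ i, p.1 i - ∑ i, p.2 i) j) := by
    intro ξ
    have hH : ∏ i, ∑ y ∈ H i, χ (-∑ j, ξ j * y j)
        = ∑ y ∈ Fintype.piFinset H, χ⁻¹ (∑ j, ξ j * (∑ i, y i) j) := by
      rw [← expand_prod χ⁻¹ H ξ]
      exact Finset.prod_congr rfl fun i _ => Finset.sum_congr rfl fun y _ =>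
        (AddChar.inv_apply χ _).symm
    rw [expand_prod χ G ξ, hH, Finset.sum_mul_sum, ← Finset.sum_product']
    refine Finset.sum_congr rfl fun p _ => ?_
    rw [AddChar.inv_apply, ← AddChar.map_add_eq_mul]
    congr 1
    rw [← Finset.sum_neg_distrib, ← Finset.sum_add_distrib]
    refine Finset.sum_congr rfl fun j _ => ?_
    simp only [Pi.sub_apply, Finset.sum_apply, sub_eq_add_neg]
    ring
  calc ∑ ξ : Fin d → F, ((∏ i, ∑ x ∈ G i, χ (∑ j, ξ j * x j)) *
        ∏ i, ∑ y ∈ H i, χ (-∑ j, ξ j * y j))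
      = ∑ p ∈ Fintype.piFinset G ×ˢ Fintype.piFinset H,
          ∑ ξ : Fin d → F, χ (∑ j, ξ j * (∑ i, p.1 i - ∑ i, p.2 i) j) := by
        rw [← Finset.sum_comm]
        exact Finset.sum_congr rfl fun ξ _ => hexp ξ
    _ = ∑ p ∈ Fintype.piFinset G ×ˢ Fintype.piFinset H,
          (if ∑ i, p.1 i = ∑ i, p.2 i then ((Fintype.card F : ℂ) ^ d) else 0) := by
        refine Finset.sum_congr rfl fun p _ => ?_
        rw [orth_pi χ hχ]
        congr 1
        simp [sub_eq_zero]
    _ = _ := by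
        rw [← Finset.sum_filter, Finset.sum_const, nsmul_eq_mul, mul_comm]

set_option maxHeartbeats 8000000 in
/-- for `d ≥ 2`, even `k ≥ 2` and `c₁, c₂, c₃ > 0` there is `C > 0` such that
for every odd prime power `q`, every `(c₁,c₂,c₃)`-regular `V ⊆ 𝔽_q^d` and every `E ⊆ V` with
`|E| > q^{(d-1)/2}`, one has `Λ_k(E) ≤ C (q^{(d-1)(k-2)/2} |E| + q^{-1} |E|^{k-1})`. -/
theorem stmt_13 (d k : ℕ) (hd : 2 ≤ d) (hk : 2 ≤ k) (hke : Even k)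
    (c1 c2 c3 : ℝ) (hc1 : 0 < c1) (hc2 : 0 < c2) (hc3 : 0 < c3) :
    ∃ C : ℝ, 0 < C ∧
      ∀ (F : Type) [Field F] [Fintype F], Odd (Fintype.card F) →
        ∀ χ : AddChar F ℂ, χ ≠ 1 →
          ∀ V : Set (Fin d → F), IsRegularVariety c1 c2 c3 χ V →
            ∀ E : Set (Fin d → F), E ⊆ V →
              (Fintype.card F : ℝ) ^ (((d : ℝ) - 1) / 2) < (Nat.card E : ℝ) →
              (energy (k / 2) E : ℝ) ≤
                C * ((Fintype.card F : ℝ) ^ ((d - 1) * (k - 2) / 2) * (Nat.card E : ℝ) +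
                  (Nat.card E : ℝ) ^ (k - 1) / (Fintype.card F : ℝ)) := by
  classical
  obtain ⟨n, hn⟩ : ∃ n, k = 2 * n + 2 := by
    obtain ⟨t, ht⟩ := hke; exact ⟨t - 1, by omega⟩
  set D : ℝ := 1 + 2 * c2 + 4 * c3 ^ 2 with hDdef
  have hD1 : (1 : ℝ) ≤ D := by nlinarith
  have hD0 : (0 : ℝ) < D := by nlinarith
  refine ⟨D ^ k, by positivity, ?_⟩
  intro F _ _ hodd χ hχ V hV E hEV hEcard
  classical
  set q := Fintype.card F with hqdef
  have hq1 : 1 < q := Fintype.one_lt_card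
  set Q : ℝ := (q : ℝ) with hQdef
  have hQ0 : (0 : ℝ) < Q := by
    rw [hQdef]; exact_mod_cast (by omega : 0 < q)
  set Ef : Finset (Fin d → F) := E.toFinset with hEfdef
  set Vf : Finset (Fin d → F) := V.toFinset with hVfdef
  set cE : ℝ := (Ef.card : ℝ) with hcEdef
  have hNatE : (Nat.card E : ℝ) = cE := by
    rw [Nat.card_coe_set_eq, Set.ncard_eq_toFinset_card']
  have hcE0 : 0 ≤ cE := by positivity
  set S : (Fin d → F) → ℂ := fun ξ => ∑ x ∈ Ef, χ (∑ j, ξ j * x j) with hSdef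
  set SV : (Fin d → F) → ℂ := fun ξ => ∑ y ∈ Vf, χ (-∑ j, ξ j * y j) with hSVdef
  set u : (Fin d → F) → ℝ := fun ξ => ‖S ξ‖ with hudef
  set v : (Fin d → F) → ℝ := fun ξ => ‖SV ξ‖ with hvdef
  have hu0 : ∀ ξ, 0 ≤ u ξ := fun ξ => norm_nonneg _
  have hv0 : ∀ ξ, 0 ≤ v ξ := fun ξ => norm_nonneg _
  set T : ℕ → ℝ := fun J => ∑ ξ : Fin d → F, u ξ ^ (2 * J) with hTdef
  have hT0 : ∀ J, 0 ≤ T J := fun J => Finset.sum_nonneg fun ξ _ => by positivity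
  set A : ℕ → ℕ := fun J =>
    ((Fintype.piFinset (fun _ : Fin J => Ef) ×ˢ Fintype.piFinset (fun _ : Fin J => Ef)).filter
      (fun p => ∑ i, p.1 i = ∑ i, p.2 i)).card with hAdef
  have hconjS : ∀ ξ : Fin d → F, ∑ y ∈ Ef, χ (-∑ j, ξ j * y j) = (starRingEnd ℂ) (S ξ) := by
    intro ξ
    rw [hSdef, map_sum]
    exact Finset.sum_congr rfl fun y _ => (AddChar.map_neg_eq_conj χ _)
  -- Identity : T J = Q^d * A J
  have hTA : ∀ J : ℕ, T J = Q ^ d * (A J : ℝ) := by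
    intro J
    have h1 : ∀ ξ : Fin d → F,
        ((∏ _i : Fin J, ∑ x ∈ Ef, χ (∑ j, ξ j * x j)) *
          ∏ _i : Fin J, ∑ y ∈ Ef, χ (-∑ j, ξ j * y j))
        = ((u ξ ^ (2 * J) : ℝ) : ℂ) := by
      intro ξ
      rw [Finset.prod_const, Finset.prod_const, card_univ, Fintype.card_fin, hconjS ξ]
      have hSx : (∑ x ∈ Ef, χ (∑ j, ξ j * x j)) = S ξ := rfl
      rw [hSx, ← mul_pow, Complex.mul_conj, ← Complex.sq_norm]
      have hux : ‖S ξ‖ = u ξ := rfl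
      rw [hux]
      push_cast
      rw [← pow_mul]
    have h3 : ∑ ξ : Fin d → F, ((u ξ ^ (2 * J) : ℝ) : ℂ)
        = ((Q ^ d * (A J : ℝ) : ℝ) : ℂ) := by
      calc ∑ ξ : Fin d → F, ((u ξ ^ (2 * J) : ℝ) : ℂ)
          = ∑ ξ : Fin d → F, ((∏ _i : Fin J, ∑ x ∈ Ef, χ (∑ j, ξ j * x j)) *
              ∏ _i : Fin J, ∑ y ∈ Ef, χ (-∑ j, ξ j * y j)) :=
            Finset.sum_congr rfl fun ξ _ => (h1 ξ).symm
        _ = (Fintype.card F : ℂ) ^ d *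
              ((((Fintype.piFinset (fun _ : Fin J => Ef) ×ˢ
                Fintype.piFinset (fun _ : Fin J => Ef)).filter
                (fun p => ∑ i, p.1 i = ∑ i, p.2 i)).card : ℕ) : ℂ) :=
            master χ hχ _ _
        _ = ((Q ^ d * (A J : ℝ) : ℝ) : ℂ) := by
            rw [hAdef, hQdef, hqdef]; push_cast; ring
    show (∑ ξ : Fin d → F, u ξ ^ (2*J)) = Q ^ d * (A J : ℝ)
    exact_mod_cast h3
  -- energy = A (k/2)
  have henergy : energy (k / 2) E = A (k / 2) := by
    rw [energy, Nat.card_eq_fintype_card, Fintype.card_subtype, hAdef]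
    congr 1
    ext p
    simp only [Finset.mem_filter, Finset.mem_product, Fintype.mem_piFinset, Finset.mem_univ,
      true_and, hEfdef, Set.mem_toFinset]
    tauto
  -- A 1 ≤ |E|
  have hA1 : (A 1 : ℝ) ≤ cE := by
    rw [hAdef, hcEdef]
    have : (((Fintype.piFinset (fun _ : Fin 1 => Ef) ×ˢ Fintype.piFinset (fun _ : Fin 1 => Ef)).filter
        (fun p => ∑ i, p.1 i = ∑ i, p.2 i)).card) ≤ Ef.card := by
      apply Finset.card_le_card_of_injOn (fun p => p.1 0)
      · intro p hp
        simp only [Finset.mem_coe, Finset.mem_filter, Finset.mem_product,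
          Fintype.mem_piFinset] at hp
        exact hp.1.1 0
      · intro p hp p' hp' h
        simp only [Finset.mem_coe, Finset.mem_filter, Finset.mem_product,
          Fintype.mem_piFinset] at hp hp'
        have hsum : ∀ (r : (Fin 1 → Fin d → F) × (Fin 1 → Fin d → F)),
            (∑ i, r.1 i = ∑ i, r.2 i) → r.2 0 = r.1 0 := by
          intro r hr
          have := hr
          rw [Fin.sum_univ_one, Fin.sum_univ_one] at this
          exact this.symm
        have e1 : p.1 = p'.1 := funext fun i => by
          have : i = 0 := Subsingleton.elim i 0
          rw [this]; exact h
        have e2 : p.2 = p'.2 := funext fun i => by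
          have hi : i = 0 := Subsingleton.elim i 0
          rw [hi, hsum p hp.2, hsum p' hp'.2, e1]
        exact Prod.ext e1 e2
    exact_mod_cast this
  have hT1 : T 1 ≤ Q ^ d * cE := by
    rw [hTA 1]
    have : (0:ℝ) ≤ Q ^ d := by positivity
    exact mul_le_mul_of_nonneg_left hA1 this
  -- regularity
  obtain ⟨hV1, hV2, hV3⟩ := hV
  have hVcard : (Vf.card : ℝ) ≤ c2 * Q ^ (d - 1) := by
    have : (Nat.card V : ℝ) = (Vf.card : ℝ) := by
      rw [Nat.card_coe_set_eq, Set.ncard_eq_toFinset_card']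
    rw [← this]; exact hV2
  set cV : ℝ := c3 * Q ^ (((d : ℝ) - 1) / 2) with hcVdef
  have hcV0 : 0 ≤ cV := by
    rw [hcVdef]; positivity
  have hqC0 : ((q : ℂ)) ^ d ≠ 0 := by
    apply pow_ne_zero
    exact_mod_cast (by omega : q ≠ 0)
  -- Fourier decay for V
  have hv_bound : ∀ ξ : Fin d → F, ξ ≠ 0 → v ξ ≤ cV := by
    intro ξ hξ
    have hft : SV ξ = (q : ℂ) ^ d * ftF χ V ξ := by
      rw [hSVdef, ftF, ← mul_assoc, mul_inv_cancel₀ hqC0, one_mul]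
      calc (∑ y ∈ Vf, χ (-∑ j, ξ j * y j))
          = ∑ y ∈ Finset.univ.filter (fun x => x ∈ V), χ (-∑ j, ξ j * y j) := by
            congr 1
            ext x
            simp [hVfdef, Set.mem_toFinset]
        _ = ∑ x : Fin d → F, Set.indicator V (fun y => χ (-(∑ i, ξ i * y i))) x := by
            rw [Finset.sum_filter]
            refine Finset.sum_congr rfl fun x _ => ?_
            by_cases hx : x ∈ V
            · rw [if_pos hx, Set.indicator_of_mem hx]
            · rw [if_neg hx, Set.indicator_of_notMem hx]
    have h2 : v ξ = Q ^ d * ‖ftF χ V ξ‖ := by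
      rw [hvdef]
      simp only [hft, norm_mul, norm_pow, Complex.norm_natCast]
      rfl
    rw [h2, hcVdef]
    have h3 := hV3 ξ hξ
    calc Q ^ d * ‖ftF χ V ξ‖
        ≤ Q ^ d * (c3 * Q ^ (-(((d : ℝ) + 1) / 2))) := by
          apply mul_le_mul_of_nonneg_left h3 (by positivity)
      _ = c3 * Q ^ (((d : ℝ) - 1) / 2) := by
          rw [← Real.rpow_natCast Q d]
          rw [mul_comm (Q ^ ((d:ℝ))) _, mul_assoc, ← Real.rpow_add hQ0]
          congr 2
          ring
  -- the key recursion
  have hrec : ∀ m : ℕ, T (m + 2) ≤ 2 * (c2 * Q ^ (d - 1) * cE ^ (2 * m + 3))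
      + 4 * (c3 ^ 2 * Q ^ (d - 1)) * T (m + 1) := by
    intro m
    set W : ℝ := ∑ ξ : Fin d → F, u ξ ^ (2 * m + 3) with hWdef
    have hW0 : 0 ≤ W := Finset.sum_nonneg fun ξ _ => by positivity
    -- Cauchy–Schwarz
    have hCS : W ^ 2 ≤ T (m + 1) * T (m + 2) := by
      have h := Finset.sum_mul_sq_le_sq_mul_sq Finset.univ
        (fun ξ : Fin d → F => u ξ ^ (m + 1)) (fun ξ => u ξ ^ (m + 2))
      calc W ^ 2 = (∑ ξ : Fin d → F, u ξ ^ (m+1) * u ξ ^ (m+2)) ^ 2 := by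
            rw [hWdef]
            congr 1
            exact Finset.sum_congr rfl fun ξ _ => by rw [← pow_add]; ring_nf
        _ ≤ (∑ ξ : Fin d → F, (u ξ ^ (m+1)) ^ 2) * ∑ ξ : Fin d → F, (u ξ ^ (m+2)) ^ 2 := h
        _ = T (m + 1) * T (m + 2) := by
            rw [hTdef]
            congr 1 <;> exact Finset.sum_congr rfl fun ξ _ => by rw [← pow_mul]; ring_nf
    -- the B-count and master
    have hEfVf : Ef ⊆ Vf := by
      rw [hEfdef, hVfdef]; exact Set.toFinset_subset_toFinset.mpr hEV
    have hkey : Q ^ d * (A (m + 2) : ℝ) ≤ cE ^ (2 * m + 3) * (c2 * Q ^ (d - 1)) + cV * W := by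
      set GV : Fin (m + 2) → Finset (Fin d → F) := Fin.cons Vf (fun _ => Ef) with hGV
      have hGV0 : GV 0 = Vf := by rw [hGV]; exact Fin.cons_zero _ _
      have hGVsucc : ∀ i : Fin (m+1), GV i.succ = Ef := fun i => by
        rw [hGV]; exact Fin.cons_succ _ _ _
      have hsub : Fintype.piFinset (fun _ : Fin (m+2) => Ef) ⊆ Fintype.piFinset GV := by
        intro y hy
        rw [Fintype.mem_piFinset] at hy ⊢
        intro i
        induction i using Fin.cases with
        | zero => rw [hGV0]; exact hEfVf (hy 0)
        | succ i => rw [hGVsucc i]; exact hy _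
      have hAB : (A (m + 2) : ℝ) ≤
          ((((Fintype.piFinset (fun _ : Fin (m+2) => Ef)) ×ˢ Fintype.piFinset GV).filter
            (fun p => ∑ i, p.1 i = ∑ i, p.2 i)).card : ℝ) := by
        rw [hAdef]
        exact_mod_cast Finset.card_le_card (Finset.filter_subset_filter _
          (Finset.product_subset_product (Finset.Subset.refl _) hsub))
      have hmB := master χ hχ (fun _ : Fin (m+2) => Ef) GV
      have hGVprod : ∀ ξ : Fin d → F,
          (∏ i : Fin (m+2), ∑ y ∈ GV i, χ (-∑ j, ξ j * y j))
            = SV ξ * (starRingEnd ℂ) (S ξ) ^ (m+1) := by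
        intro ξ
        rw [Fin.prod_univ_succ, hGV0]
        have h2 : ∀ i : Fin (m+1), (∑ y ∈ GV i.succ, χ (-∑ j, ξ j * y j))
            = (starRingEnd ℂ) (S ξ) := fun i => by rw [hGVsucc i]; exact hconjS ξ
        rw [Finset.prod_congr rfl (fun i _ => h2 i), Finset.prod_const, card_univ,
          Fintype.card_fin]
      have hEprod : ∀ ξ : Fin d → F,
          (∏ _i : Fin (m+2), ∑ x ∈ Ef, χ (∑ j, ξ j * x j)) = S ξ ^ (m + 2) := by
        intro ξ
        rw [Finset.prod_const, card_univ, Fintype.card_fin]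
      have hmB' : (Fintype.card F : ℂ) ^ d *
          (((((Fintype.piFinset (fun _ : Fin (m+2) => Ef)) ×ˢ Fintype.piFinset GV).filter
            (fun p => ∑ i, p.1 i = ∑ i, p.2 i)).card : ℕ) : ℂ)
          = ∑ ξ : Fin d → F, S ξ ^ (m+2) * (SV ξ * (starRingEnd ℂ) (S ξ) ^ (m+1)) := by
        rw [← hmB]
        exact Finset.sum_congr rfl fun ξ _ => by rw [hEprod ξ, hGVprod ξ]
      -- take absolute values
      have habs : Q ^ d *
          ((((((Fintype.piFinset (fun _ : Fin (m+2) => Ef)) ×ˢ Fintype.piFinset GV).filter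
            (fun p => ∑ i, p.1 i = ∑ i, p.2 i)).card : ℕ)) : ℝ)
          ≤ ∑ ξ : Fin d → F, v ξ * u ξ ^ (2 * m + 3) := by
        have h1 : Q ^ d *
            ((((((Fintype.piFinset (fun _ : Fin (m+2) => Ef)) ×ˢ Fintype.piFinset GV).filter
              (fun p => ∑ i, p.1 i = ∑ i, p.2 i)).card : ℕ)) : ℝ)
            = ‖∑ ξ : Fin d → F, S ξ ^ (m+2) * (SV ξ * (starRingEnd ℂ) (S ξ) ^ (m+1))‖ := by
          rw [← hmB', norm_mul, norm_pow, Complex.norm_natCast, Complex.norm_natCast, hQdef, hqdef]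
        rw [h1]
        refine le_trans (norm_sum_le _ _) ?_
        refine Finset.sum_le_sum fun ξ _ => ?_
        rw [norm_mul, norm_pow, norm_mul, norm_pow, Complex.norm_conj]
        have : ‖S ξ‖ = u ξ := rfl
        rw [this]
        have hv' : ‖SV ξ‖ = v ξ := rfl
        rw [hv']
        have heq : u ξ ^ (m+2) * (v ξ * u ξ ^ (m+1)) = v ξ * u ξ ^ (2*m+3) := by
          rw [show 2*m+3 = (m+2)+(m+1) by ring, pow_add]; ring
        exact le_of_eq heq
      -- split off ξ = 0
      have hsplit : ∑ ξ : Fin d → F, v ξ * u ξ ^ (2 * m + 3)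
          ≤ cE ^ (2 * m + 3) * (c2 * Q ^ (d - 1)) + cV * W := by
        have hu0val : u 0 = cE := by
          rw [hudef, hSdef, hcEdef]
          simp only
          have : ∀ x ∈ Ef, χ (∑ j, (0 : Fin d → F) j * x j) = 1 := by
            intro x _
            simp
          rw [Finset.sum_congr rfl this, Finset.sum_const, nsmul_eq_mul, mul_one,
            Complex.norm_natCast]
        have hv0val : v 0 = (Vf.card : ℝ) := by
          rw [hvdef, hSVdef]
          simp only
          have : ∀ y ∈ Vf, χ (-∑ j, (0 : Fin d → F) j * y j) = 1 := by
            intro y _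
            simp
          rw [Finset.sum_congr rfl this, Finset.sum_const, nsmul_eq_mul, mul_one,
            Complex.norm_natCast]
        have hzero_mem : (0 : Fin d → F) ∈ (Finset.univ : Finset (Fin d → F)) := Finset.mem_univ _
        rw [← Finset.add_sum_erase _ _ hzero_mem]
        have hterm0 : v 0 * u 0 ^ (2*m+3) ≤ cE ^ (2*m+3) * (c2 * Q ^ (d-1)) := by
          rw [hu0val, hv0val]
          calc (Vf.card : ℝ) * cE ^ (2*m+3) ≤ (c2 * Q ^ (d-1)) * cE ^ (2*m+3) :=
                mul_le_mul_of_nonneg_right hVcard (by positivity)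
            _ = cE ^ (2*m+3) * (c2 * Q ^ (d-1)) := by ring
        have hrest : ∑ ξ ∈ Finset.univ.erase 0, v ξ * u ξ ^ (2*m+3) ≤ cV * W := by
          calc ∑ ξ ∈ Finset.univ.erase 0, v ξ * u ξ ^ (2*m+3)
              ≤ ∑ ξ ∈ Finset.univ.erase 0, cV * u ξ ^ (2*m+3) := by
                refine Finset.sum_le_sum fun ξ hξ => ?_
                have hξ0 : ξ ≠ 0 := Finset.ne_of_mem_erase hξ
                exact mul_le_mul_of_nonneg_right (hv_bound ξ hξ0) (by positivity)
            _ = cV * ∑ ξ ∈ Finset.univ.erase 0, u ξ ^ (2*m+3) := by rw [Finset.mul_sum]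
            _ ≤ cV * W := by
                apply mul_le_mul_of_nonneg_left _ hcV0
                rw [hWdef]
                exact Finset.sum_le_sum_of_subset_of_nonneg (Finset.erase_subset _ _)
                  (fun ξ _ _ => by positivity)
        linarith [hterm0, hrest]
      calc Q ^ d * (A (m + 2) : ℝ)
          ≤ Q ^ d * ((((Fintype.piFinset (fun _ : Fin (m+2) => Ef)) ×ˢ
              Fintype.piFinset GV).filter (fun p => ∑ i, p.1 i = ∑ i, p.2 i)).card : ℝ) :=
            mul_le_mul_of_nonneg_left hAB (by positivity)
        _ ≤ ∑ ξ : Fin d → F, v ξ * u ξ ^ (2 * m + 3) := habs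
        _ ≤ cE ^ (2 * m + 3) * (c2 * Q ^ (d - 1)) + cV * W := hsplit
    -- conclude via the quadratic trick
    have hX : T (m + 2) ≤ c2 * Q ^ (d-1) * cE ^ (2*m+3) + cV * W := by
      rw [hTA (m+2)]
      calc Q ^ d * (A (m+2) : ℝ) ≤ cE ^ (2*m+3) * (c2 * Q ^ (d-1)) + cV * W := hkey
        _ = c2 * Q ^ (d-1) * cE ^ (2*m+3) + cV * W := by ring
    have hcV2 : cV ^ 2 = c3 ^ 2 * Q ^ (d - 1) := by
      rw [hcVdef, mul_pow]
      congr 1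
      rw [← Real.rpow_natCast (Q ^ (((d:ℝ)-1)/2)) 2, ← Real.rpow_mul hQ0.le]
      rw [← Real.rpow_natCast Q (d-1)]
      congr 1
      rw [Nat.cast_sub (by omega : 1 ≤ d)]
      push_cast
      ring
    set a : ℝ := c2 * Q ^ (d-1) * cE ^ (2*m+3) with hadef
    have ha0 : 0 ≤ a := by rw [hadef]; positivity
    rcases le_or_gt (T (m+2)) (2 * a) with hc | hc
    · have : 0 ≤ 4 * (c3 ^ 2 * Q ^ (d-1)) * T (m+1) := by positivity
      calc T (m+2) ≤ 2*a := hc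
        _ = 2 * (c2 * Q ^ (d-1) * cE ^ (2*m+3)) := by rw [hadef]
        _ ≤ _ := by linarith
    · -- T(m+2)/2 < cV * W
      have hX0 : 0 < T (m+2) := lt_of_le_of_lt (by positivity) hc
      have h1 : T (m+2) / 2 < cV * W := by linarith
      have h2 : (T (m+2) / 2) ^ 2 < (cV * W) ^ 2 := by
        apply pow_lt_pow_left₀ h1 (by positivity) (by norm_num)
      have h3 : (cV * W) ^ 2 ≤ (c3 ^ 2 * Q ^ (d-1)) * (T (m+1) * T (m+2)) := by
        calc (cV * W)^2 = cV^2 * W^2 := by ring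
          _ ≤ cV^2 * (T (m+1) * T (m+2)) := by
            apply mul_le_mul_of_nonneg_left hCS (by positivity)
          _ = (c3 ^ 2 * Q ^ (d-1)) * (T (m+1) * T (m+2)) := by rw [hcV2]
      have h4 : T (m+2) ^ 2 / 4 < (c3 ^ 2 * Q ^ (d-1)) * T (m+1) * T (m+2) := by
        calc T (m+2)^2/4 = (T (m+2)/2)^2 := by ring
          _ < (cV * W)^2 := h2
          _ ≤ (c3 ^ 2 * Q ^ (d-1)) * (T (m+1) * T (m+2)) := h3
          _ = (c3 ^ 2 * Q ^ (d-1)) * T (m+1) * T (m+2) := by ring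
      have h5 : T (m+2) / 4 < (c3 ^ 2 * Q ^ (d-1)) * T (m+1) := by
        have h6 : T (m+2)/4 * T (m+2) < ((c3 ^ 2 * Q ^ (d-1)) * T (m+1)) * T (m+2) := by
          calc T (m+2)/4 * T (m+2) = T (m+2)^2/4 := by ring
            _ < (c3 ^ 2 * Q ^ (d-1)) * T (m+1) * T (m+2) := h4
        exact lt_of_mul_lt_mul_right h6 hX0.le
      linarith
  -- |E|^2 beats q^(d-1)
  have hE2 : Q ^ (d - 1) ≤ cE ^ 2 := by
    have h1 : Q ^ (((d:ℝ)-1)/2) < cE := by rw [← hNatE]; exact hEcard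
    have h2 : (Q ^ (((d:ℝ)-1)/2)) ^ 2 ≤ cE ^ 2 := by
      apply pow_le_pow_left₀ (by positivity) h1.le
    calc Q ^ (d-1) = (Q ^ (((d:ℝ)-1)/2)) ^ 2 := by
          rw [← Real.rpow_natCast (Q ^ (((d:ℝ)-1)/2)) 2, ← Real.rpow_mul hQ0.le,
            ← Real.rpow_natCast Q (d-1)]
          congr 1
          rw [Nat.cast_sub (by omega : 1 ≤ d)]
          push_cast
          ring
      _ ≤ cE ^ 2 := h2
  -- main induction
  have hmain : ∀ m : ℕ, T (m + 1) ≤ D ^ (m + 1) *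
      (Q ^ (d - 1) * cE ^ (2 * m + 1) + Q ^ ((d - 1) * m) * Q ^ d * cE) := by
    intro m
    induction m with
    | zero =>
      have h1 : Q ^ ((d-1) * 0) = 1 := by norm_num
      have h2 : T 1 ≤ Q ^ d * cE := hT1
      have h3 : (0:ℝ) ≤ Q ^ (d-1) * cE ^ (2*0+1) := by positivity
      have h4 : Q ^ d * cE ≤ D * (Q ^ (d-1) * cE ^ (2*0+1) + Q ^ ((d-1)*0) * Q ^ d * cE) := by
        have e1 : (2*0+1 : ℕ) = 1 := by norm_num
        rw [e1, h1, pow_one, one_mul]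
        have h5 : Q ^ d * cE ≤ D * (Q ^ d * cE) := le_mul_of_one_le_left (by positivity) hD1
        have h6 : (0:ℝ) ≤ D * (Q ^ (d-1) * cE) := by positivity
        nlinarith [h5, h6]
      calc T (0+1) ≤ Q ^ d * cE := h2
        _ ≤ D * (Q ^ (d-1) * cE ^ (2*0+1) + Q ^ ((d-1)*0) * Q ^ d * cE) := h4
        _ = D ^ (0+1) * (Q ^ (d-1) * cE ^ (2*0+1) + Q ^ ((d-1)*0) * Q ^ d * cE) := by
          ring
    | succ m ih =>
      have hr := hrec m
      set P1 : ℝ := Q ^ (d-1) * cE ^ (2*(m+1)+1) with hP1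
      set P2 : ℝ := Q ^ ((d-1)*(m+1)) * Q ^ d * cE with hP2
      have hP10 : 0 ≤ P1 := by
        rw [hP1]; exact mul_nonneg (pow_nonneg hQ0.le _) (pow_nonneg hcE0 _)
      have hP20 : 0 ≤ P2 := by
        rw [hP2]
        exact mul_nonneg (mul_nonneg (pow_nonneg hQ0.le _) (pow_nonneg hQ0.le _)) hcE0
      have hQd1 : (0:ℝ) ≤ Q ^ (d-1) := pow_nonneg hQ0.le _
      have hb1 : Q ^ (d-1) * (Q ^ (d-1) * cE ^ (2*m+1)) ≤ P1 := by
        have h2 : cE ^ (2*(m+1)+1) = cE ^ (2*m+1) * cE ^ 2 := by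
          rw [show 2*(m+1)+1 = (2*m+1)+2 by ring, pow_add]
        rw [hP1, h2]
        have h3 : (0:ℝ) ≤ Q ^ (d-1) * cE ^ (2*m+1) :=
          mul_nonneg (pow_nonneg hQ0.le _) (pow_nonneg hcE0 _)
        calc Q ^ (d-1) * (Q ^ (d-1) * cE ^ (2*m+1))
            = (Q ^ (d-1) * cE ^ (2*m+1)) * Q ^ (d-1) := by ring
          _ ≤ (Q ^ (d-1) * cE ^ (2*m+1)) * cE ^ 2 := mul_le_mul_of_nonneg_left hE2 h3
          _ = Q ^ (d-1) * (cE ^ (2*m+1) * cE ^ 2) := by ring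
      have hb2 : Q ^ (d-1) * (Q ^ ((d-1)*m) * Q ^ d * cE) = P2 := by
        rw [hP2, ← mul_assoc, ← mul_assoc, ← pow_add]
        congr 3
        ring
      have hDm1 : (1:ℝ) ≤ D ^ (m+1) := one_le_pow₀ hD1
      have hDm0 : (0:ℝ) < D ^ (m+1) := by positivity
      have hstep : T (m+2) ≤ (2*c2 + 4*c3^2 * D^(m+1)) * (P1 + P2) := by
        have hTm1 : Q ^ (d-1) * T (m+1) ≤ D^(m+1) * (P1 + P2) := by
          calc Q ^ (d-1) * T (m+1)
              ≤ Q ^ (d-1) * (D ^ (m+1) * (Q ^ (d-1) * cE ^ (2*m+1) + Q ^ ((d-1)*m) * Q ^ d * cE)) :=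
                mul_le_mul_of_nonneg_left ih hQd1
            _ = D^(m+1) * (Q ^ (d-1) * (Q ^ (d-1) * cE ^ (2*m+1)) + Q ^ (d-1) * (Q ^ ((d-1)*m) * Q ^ d * cE)) := by
                ring
            _ ≤ D^(m+1) * (P1 + P2) := by
                apply mul_le_mul_of_nonneg_left _ hDm0.le
                rw [← hb2]
                linarith [hb1]
        have hcE3 : c2 * Q ^ (d-1) * cE ^ (2*m+3) ≤ c2 * P1 := by
          rw [hP1]
          have : 2*(m+1)+1 = 2*m+3 := by ring
          rw [this]
          calc c2 * Q ^ (d-1) * cE ^ (2*m+3) = c2 * (Q ^ (d-1) * cE ^ (2*m+3)) := by ring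
            _ ≤ c2 * (Q ^ (d-1) * cE ^ (2*m+3)) := le_refl _
        calc T (m+2) ≤ 2 * (c2 * Q ^ (d-1) * cE ^ (2*m+3)) + 4 * (c3^2 * Q ^ (d-1)) * T (m+1) := hr
          _ = 2 * (c2 * Q ^ (d-1) * cE ^ (2*m+3)) + 4 * c3^2 * (Q ^ (d-1) * T (m+1)) := by ring
          _ ≤ 2 * (c2 * P1) + 4 * c3^2 * (D^(m+1) * (P1 + P2)) := by
              have hc3Q : (0:ℝ) ≤ 4 * c3^2 := by positivity
              have := mul_le_mul_of_nonneg_left hTm1 hc3Q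
              have h6 : 2 * (c2 * Q ^ (d-1) * cE ^ (2*m+3)) ≤ 2 * (c2 * P1) := by
                have := hcE3
                linarith
              linarith
          _ ≤ (2*c2 + 4*c3^2 * D^(m+1)) * (P1 + P2) := by
              have hexp : (2*c2 + 4*c3^2 * D^(m+1)) * (P1 + P2)
                  = 2*(c2*P1) + 4*c3^2*(D^(m+1)*(P1+P2)) + 2*(c2*P2) := by ring
              have hnn : 0 ≤ c2 * P2 := mul_nonneg hc2.le hP20
              linarith [hexp, hnn]
      have hcoef : 2*c2 + 4*c3^2 * D^(m+1) ≤ D^(m+2) := by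
        have : D^(m+2) = D * D^(m+1) := by ring
        rw [this, hDdef]
        nlinarith [hDm1, hc2, hc3, sq_nonneg c3]
      calc T (m+1+1) ≤ (2*c2 + 4*c3^2 * D^(m+1)) * (P1 + P2) := hstep
        _ ≤ D^(m+2) * (P1 + P2) := by
            apply mul_le_mul_of_nonneg_right hcoef (by linarith)
        _ = D ^ (m+1+1) * (P1 + P2) := by ring
  -- final assembly
  have hk2 : k / 2 = n + 1 := by omega
  have hfinal := hmain n
  rw [henergy, hk2]
  have hQd0 : (0:ℝ) < Q ^ d := by positivity
  have hAbound : (A (n+1) : ℝ) * Q ^ d ≤ D ^ (n+1) *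
      (Q ^ (d - 1) * cE ^ (2*n+1) + Q ^ ((d-1)*n) * Q ^ d * cE) := by
    rw [mul_comm, ← hTA (n+1)]
    exact hfinal
  have hQd_split : Q ^ d = Q ^ (d - 1) * Q := by
    rw [← pow_succ]
    congr 1
    omega
  have hexp1 : (d - 1) * (k - 2) / 2 = (d - 1) * n := by
    have h : k - 2 = 2 * n := by omega
    rw [h, show (d-1) * (2*n) = ((d-1)*n) * 2 by ring,
      Nat.mul_div_cancel _ (by norm_num : 0 < 2)]
  have hexp2 : k - 1 = 2 * n + 1 := by omega
  rw [hNatE, hexp1, hexp2]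
  -- target : (A (n+1) : ℝ) ≤ D^k * (Q^((d-1)*n) * cE + cE^(2n+1)/Q)
  have hstep2 : (A (n+1) : ℝ) ≤ D ^ (n+1) * (Q ^ ((d-1)*n) * cE + cE ^ (2*n+1) / Q) := by
    rw [← mul_le_mul_iff_of_pos_right hQd0]
    calc (A (n+1) : ℝ) * Q ^ d ≤ D ^ (n+1) *
        (Q ^ (d - 1) * cE ^ (2*n+1) + Q ^ ((d-1)*n) * Q ^ d * cE) := hAbound
      _ = D ^ (n+1) * (Q ^ ((d-1)*n) * cE + cE ^ (2*n+1) / Q) * Q ^ d := by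
          rw [hQd_split]
          field_simp
          ring
  have hDle : D ^ (n+1) ≤ D ^ k := by
    apply pow_le_pow_right₀ hD1
    omega
  calc (A (n+1) : ℝ) ≤ D ^ (n+1) * (Q ^ ((d-1)*n) * cE + cE ^ (2*n+1) / Q) := hstep2
    _ ≤ D ^ k * (Q ^ ((d-1)*n) * cE + cE ^ (2*n+1) / Q) := by
        apply mul_le_mul_of_nonneg_right hDle
        positivity
end
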